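/- arXiv:0905.2665 — 4 statements merged into one kernel-verified Lean document; each statement's English description precedes it below -/
import Mathlib

section
/- Every total continuous function Φ : A^A → A (where A is an infinite discrete set and A^A has the product topology) is sequential, i.e., there exists a well-founded total sequential tree T of finite partial functions on A and a function F from the leaves of T to A such that Φ = Φ_{T,F}. -/
open Classical

noncomputable section

namespace OostenK2

universe u

/-! ### Finite partial functions -/

/-- Finite partial functions `A ⇀ A`, as finite functional graphs,
ordered by inclusion of graphs. -/
abbrev FPF (A : Type u) : Type u :=
  {p : Set (A × A) // (∀ ⦃a b b'⦄, (a, b) ∈ p → (a, b') ∈ p → b = b') ∧ p.Finite}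

variable {A : Type u}

/-- The domain of a finite partial function. -/
def FPF.dom (p : FPF A) : Set A := Prod.fst '' p.val

/-- The empty finite partial function (the root of sequential trees). -/
def FPF.empty (A : Type u) : FPF A :=
  ⟨∅, fun _ _ _ h => absurd h (Set.notMem_empty _), Set.finite_empty⟩

/-- A total function `α` extends the finite partial function `p`. -/
def agrees (α : A → A) (p : FPF A) : Prop := ∀ ⦃a b⦄, (a, b) ∈ p.val → α a = b

/-- A partial function `β` extends the finite partial function `p`. -/
def agreesP (β : A → Option A) (p : FPF A) : Prop :=
  ∀ ⦃a b⦄, (a, b) ∈ p.val → β a = some b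

/-- Two finite partial functions are compatible if their union is a function. -/
def compatFPF (s t : FPF A) : Prop :=
  ∀ ⦃a b b'⦄, (a, b) ∈ s.val → (a, b') ∈ t.val → b = b'

/-! ### Trees -/

section Trees

variable {X : Type*} [PartialOrder X]

/-- A leaf of `T`: an element of `T` with no strict extension in `T`. -/
def IsLeaf (T : Set X) (p : X) : Prop := p ∈ T ∧ ¬∃ q ∈ T, p < q

/-- `q` is an immediate successor of `p` in `T`. -/
def ImmSucc (T : Set X) (p q : X) : Prop :=
  q ∈ T ∧ p < q ∧ ¬∃ t ∈ T, p < t ∧ t < q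

/-- `T` is a tree with root `root`: the root belongs to `T`, lies below every
element, and the predecessors of any element form a chain. -/
def IsTreeOn (root : X) (T : Set X) : Prop :=
  root ∈ T ∧ (∀ p ∈ T, root ≤ p) ∧ ∀ p ∈ T, IsChain (· ≤ ·) {t | t ∈ T ∧ t ≤ p}

/-- A tree is well-founded iff it has no infinite strictly increasing path. -/
def WellFoundedTree (T : Set X) : Prop :=
  ¬∃ f : ℕ → X, (∀ n, f n ∈ T) ∧ StrictMono f

end Trees

/-- A sequential tree: a tree of finite partial functions, rooted at the empty
function, in which all immediate successors of a non-leaf `p` have domain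
`dom p ∪ {a}` for a single `a ∉ dom p`. -/
def IsSeqTree (T : Set (FPF A)) : Prop :=
  IsTreeOn (FPF.empty A) T ∧
  ∀ p ∈ T, ¬IsLeaf T p →
    ∃ a ∉ FPF.dom p, ∀ q, ImmSucc T p q → FPF.dom q = insert a (FPF.dom p)

/-- A total sequential tree: the immediate successors of a non-leaf `p` are
*all* extensions of `p` with domain `dom p ∪ {a}`. -/
def IsTotalSeqTree (T : Set (FPF A)) : Prop :=
  IsTreeOn (FPF.empty A) T ∧
  ∀ p ∈ T, ¬IsLeaf T p →
    ∃ a ∉ FPF.dom p,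
      ∀ q : FPF A, ImmSucc T p q ↔ p < q ∧ FPF.dom q = insert a (FPF.dom p)

/-- `Φ` (as a relation `(A → A) → A → Prop`) is a partial sequential function:
`Φ α = b` iff the path of `α` through some total sequential tree `T` ends in a
leaf `v` with `F v = b`. -/
def SeqRel (Φ : (A → A) → A → Prop) : Prop :=
  ∃ (T : Set (FPF A)) (F : FPF A → A), IsTotalSeqTree T ∧
    ∀ α b, Φ α b ↔ ∃ v, IsLeaf T v ∧ agrees α v ∧ F v = b

/-- A total bisequential tree: pairs of finite partial functions ordered by
pairwise inclusion; at every non-leaf, either the first or the second component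
is interrogated at a single new argument, with all possible answers present. -/
def IsTotalBiTree (T : Set (FPF A × FPF A)) : Prop :=
  IsTreeOn (FPF.empty A, FPF.empty A) T ∧
  ∀ p ∈ T, ¬IsLeaf T p →
    (∃ a ∉ FPF.dom p.1, ∀ q : FPF A × FPF A,
        ImmSucc T p q ↔ q.2 = p.2 ∧ p.1 ≤ q.1 ∧ FPF.dom q.1 = insert a (FPF.dom p.1)) ∨
    (∃ b ∉ FPF.dom p.2, ∀ q : FPF A × FPF A,
        ImmSucc T p q ↔ q.1 = p.1 ∧ p.2 ≤ q.2 ∧ FPF.dom q.2 = insert b (FPF.dom p.2))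

/-- `G` is a total bisequential function. -/
def BiSeqTotal (G : (A → A) → (A → A) → A) : Prop :=
  ∃ (T : Set (FPF A × FPF A)) (F : FPF A × FPF A → A), IsTotalBiTree T ∧
    ∀ α β, ∃ v, IsLeaf T v ∧ agrees α v.1 ∧ agrees β v.2 ∧ G α β = F v

/-! ### Interrogations (total functions)

Throughout, `mk : List A → A` is an injective coding of finite sequences,
`qp b` is the code `⟨q,b⟩` of a query and `rp c` the code `⟨r,c⟩` of a result. -/

/-- `L` is an interrogation of `β` by `α`. -/
def Interrog (mk : List A → A) (qp : A → A) (α β : A → A) (L : List A) : Prop :=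
  ∀ j (hj : j < L.length), ∃ b, α (mk (L.take j)) = qp b ∧ β b = L[j]'hj

/-- `φ_α(β) = c` via interrogations. -/
def phiRel (mk : List A → A) (qp rp : A → A) (α β : A → A) (c : A) : Prop :=
  ∃ L, Interrog mk qp α β L ∧ α (mk L) = rp c

/-- `L` is an `a`-interrogation of `β` by `α`. -/
def AInterrog (mk : List A → A) (qp : A → A) (a : A) (α β : A → A) (L : List A) : Prop :=
  ∀ j (hj : j < L.length), ∃ b, α (mk (a :: L.take j)) = qp b ∧ β b = L[j]'hj

/-- `φ^a(α,β) = c` via `a`-interrogations. -/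
def phiA (mk : List A → A) (qp rp : A → A) (a : A) (α β : A → A) (c : A) : Prop :=
  ∃ L, AInterrog mk qp a α β L ∧ α (mk (a :: L)) = rp c

/-- The application of `K₂(A)`: `αβ` is defined with value `γ` iff
`φ^a(α,β) = γ a` for every `a`. -/
def AppRel (mk : List A → A) (qp rp : A → A) (α β γ : A → A) : Prop :=
  ∀ a, phiA mk qp rp a α β (γ a)

/-! ### Partial combinatory algebras (abstractly) -/

/-- A set with a partial binary application. -/
structure PCAStruct (X : Type*) where
  app : X → X → Part X

/-- Extension of the application to `Part`; `Part`-equality is Kleene equality. -/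
def pap {X : Type*} (S : PCAStruct X) (u v : Part X) : Part X :=
  u.bind fun a => v.bind fun b => S.app a b

/-- `S` is a partial combinatory algebra: there are `k`, `s` with
`kxy = x` (everywhere defined), `sxy` defined, and `sxyz ≃ (xz)(yz)`. -/
def IsPCA {X : Type*} (S : PCAStruct X) : Prop :=
  ∃ k s : X,
    (∀ x y : X, pap S (S.app k x) (Part.some y) = Part.some x) ∧
    (∀ x y : X, (pap S (S.app s x) (Part.some y)).Dom) ∧
    (∀ x y z : X,
      pap S (pap S (S.app s x) (Part.some y)) (Part.some z)
        = pap S (S.app x z) (S.app y z))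

/-- `t`, `f` are Booleans of `S`: distinct, with a definition-by-cases combinator. -/
def IsBooleans {X : Type*} (S : PCAStruct X) (t f : X) : Prop :=
  t ≠ f ∧ ∃ C : X, ∀ a b : X,
    pap S (pap S (S.app C t) (Part.some a)) (Part.some b) = Part.some a ∧
    pap S (pap S (S.app C f) (Part.some a)) (Part.some b) = Part.some b

/-- Applicative morphism `γ : S → T`: a total relation such that some realizer
`r` tracks application. -/
def IsAppMor {X Y : Type*} (S : PCAStruct X) (T : PCAStruct Y) (γ : X → Set Y) : Prop :=
  (∀ x, (γ x).Nonempty) ∧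
  ∃ r : Y, ∀ x x' z : X, z ∈ S.app x x' → ∀ b ∈ γ x, ∀ b' ∈ γ x',
    ∃ w, w ∈ pap T (T.app r b) (Part.some b') ∧ w ∈ γ z

/-- The preorder on applicative morphisms. -/
def morLE {X Y : Type*} (T : PCAStruct Y) (γ γ' : X → Set Y) : Prop :=
  ∃ s : Y, ∀ x : X, ∀ b ∈ γ x, ∃ c, c ∈ T.app s b ∧ c ∈ γ' x

def morEquiv {X Y : Type*} (T : PCAStruct Y) (γ γ' : X → Set Y) : Prop :=
  morLE T γ γ' ∧ morLE T γ' γ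

/-- Composition of applicative morphisms (as total relations). -/
def morComp {X Y Z : Type*} (γ : X → Set Y) (ε : Y → Set Z) : X → Set Z :=
  fun x => ⋃ y ∈ γ x, ε y

/-- Decidability of a morphism w.r.t. chosen Booleans. -/
def IsDecidableMor {X Y : Type*} (T : PCAStruct Y) (γ : X → Set Y)
    (tX fX : X) (tY fY : Y) : Prop :=
  ∃ d : Y, (∀ b ∈ γ tX, T.app d b = Part.some tY) ∧
    (∀ b ∈ γ fX, T.app d b = Part.some fY)

/-- `rf` represents the partial function `f : X ⇀ X` w.r.t. `γ`. -/
def RepresentsPFun {X Y : Type*} (T : PCAStruct Y) (γ : X → Set Y)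
    (f : X → Option X) (rf : Y) : Prop :=
  ∀ a x, f a = some x → ∀ b ∈ γ a, ∃ c, c ∈ T.app rf b ∧ c ∈ γ x

/-- The pca `K₂(A)` on `A^A` (application via `a`-interrogations). -/
def K2 (mk : List A → A) (qp rp : A → A) : PCAStruct (A → A) where
  app α β := ⟨∀ a, ∃ c, phiA mk qp rp a α β c, fun h a => (h a).choose⟩

/-! ### Interrogations for partial functions -/

/-- Interrogation of a partial `β` by a partial `α`. -/
def PInterrog (mk : List A → A) (qp : A → A) (α β : A → Option A) (L : List A) : Prop :=
  ∀ j (hj : j < L.length), ∃ b, α (mk (L.take j)) = some (qp b) ∧ β b = some (L[j]'hj)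

/-- `φ_α(β) = c` for partial functions. -/
def phiPRel (mk : List A → A) (qp rp : A → A) (α β : A → Option A) (c : A) : Prop :=
  ∃ L, PInterrog mk qp α β L ∧ α (mk L) = some (rp c)

/-- `a`-interrogation of a partial `β` by a partial `α`. -/
def PAInterrog (mk : List A → A) (qp : A → A) (a : A) (α β : A → Option A)
    (L : List A) : Prop :=
  ∀ j (hj : j < L.length), ∃ b, α (mk (a :: L.take j)) = some (qp b) ∧ β b = some (L[j]'hj)

/-- `φ^a(α,β) = c` for partial functions. -/
def phiPA (mk : List A → A) (qp rp : A → A) (a : A) (α β : A → Option A) (c : A) : Prop :=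
  ∃ L, PAInterrog mk qp a α β L ∧ α (mk (a :: L)) = some (rp c)

/-- The (total!) application of `K₂^p(A)` on partial functions. -/
def K2pApp (mk : List A → A) (qp rp : A → A) (α β : A → Option A) : A → Option A :=
  fun a => if h : ∃ c, phiPA mk qp rp a α β c then some h.choose else none

/-- `K₂^p(A)` as a `PCAStruct` (with everywhere-defined application). -/
def K2p (mk : List A → A) (qp rp : A → A) : PCAStruct (A → Option A) :=
  ⟨fun α β => Part.some (K2pApp mk qp rp α β)⟩

/-! ### A pca with standard structure (Booleans, pairing, tuple coding, recursion) -/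

/-- A pca together with the standard derived structure: Booleans with a case
combinator, pairing, an injective standard tuple coding with combinators
manipulating it, and a fixed-point combinator. All of these exist in any
(nontrivial) pca. -/
structure StdPCA (A : Type u) where
  S : PCAStruct A
  isPCA : IsPCA S
  t : A
  f : A
  t_ne_f : t ≠ f
  Cc : A
  C_t : ∀ a b : A, pap S (pap S (S.app Cc t) (Part.some a)) (Part.some b) = Part.some a
  C_f : ∀ a b : A, pap S (pap S (S.app Cc f) (Part.some a)) (Part.some b) = Part.some b
  pairF : A → A → A
  Pc : A
  P0 : A
  P1 : A
  P_spec : ∀ x y : A, pap S (S.app Pc x) (Part.some y) = Part.some (pairF x y)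
  P0_spec : ∀ x y : A, S.app P0 (pairF x y) = Part.some x
  P1_spec : ∀ x y : A, S.app P1 (pairF x y) = Part.some y
  tup : List A → A
  tup_inj : Function.Injective tup
  CONS : A
  CONS_spec : ∀ (x : A) (L : List A),
    pap S (S.app CONS x) (Part.some (tup L)) = Part.some (tup (x :: L))
  SNOC : A
  SNOC_spec : ∀ (L : List A) (y : A),
    pap S (S.app SNOC (tup L)) (Part.some y) = Part.some (tup (L ++ [y]))
  Zc : A
  Z_spec : ∀ g : A, (S.app Zc g).Dom ∧ ∀ zg ∈ S.app Zc g, ∀ x : A,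
    S.app zg x = pap S (S.app g zg) (Part.some x)

/-- The partial function `x ↦ a·x` represented by `a ∈ A`. -/
def abar (P : StdPCA A) (a : A) : A → Option A :=
  fun x => if h : (P.S.app a x).Dom then some ((P.S.app a x).get h) else none

/-- An `x`-interrogation of the oracle `g : A ⇀ A` by `a ∈ A`, inside the pca. -/
def OInterrog (P : StdPCA A) (g : A → Option A) (a x : A) (L : List A) : Prop :=
  ∀ j (hj : j < L.length), ∃ v,
    P.S.app a (P.tup (x :: L.take j)) = Part.some (P.pairF P.f v) ∧ g v = some (L[j]'hj)

/-- The oracle application of `A[g]` : `a ·^g x = c`. -/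
def oapp (P : StdPCA A) (g : A → Option A) (a x c : A) : Prop :=
  ∃ L, OInterrog P g a x L ∧ P.S.app a (P.tup (x :: L)) = Part.some (P.pairF P.t c)

/-- `fn ≤_T g` : `fn` is representable in `A[g]`. -/
def leT (P : StdPCA A) (fn g : A → Option A) : Prop :=
  ∃ a : A, ∀ x y, fn x = some y → oapp P g a x y

/-- `j` is the join `f ⊔ g`. -/
def JoinSpec (P : StdPCA A) (f g j : A → Option A) : Prop :=
  (∀ x, j (P.pairF P.t x) = f x) ∧ (∀ x, j (P.pairF P.f x) = g x) ∧
  (∀ y, (∀ x, y ≠ P.pairF P.t x ∧ y ≠ P.pairF P.f x) → j y = none)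

/-- `K₂(A)` (built from the coding `mk`, `q`, `r`) is compatible with the pca
structure on `A`: elements of `A` translate between the codings and between
`q, r` and `⊥, ⊤`. -/
def CompatCoding (P : StdPCA A) (mk : List A → A) (q r : A) : Prop :=
  (∃ a : A, ∀ L, P.S.app a (mk L) = Part.some (P.tup L)) ∧
  (∃ b : A, ∀ L, P.S.app b (P.tup L) = Part.some (mk L)) ∧
  (∃ c : A, P.S.app c q = Part.some P.f ∧ P.S.app c r = Part.some P.t)

variable {A : Type u}

namespace S0P
set_option linter.unusedSectionVars false

/-! generic list lemmas -/

theorem suffix_eq_drop {l t : List A} (h : l <:+ t) :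
    l = t.drop (t.length - l.length) := by
  obtain ⟨u, rfl⟩ := h
  rw [List.length_append, Nat.add_sub_cancel, List.drop_left]

theorem suffix_of_suffix_length_le {s₁ s₂ t : List A} (h1 : s₁ <:+ t) (h2 : s₂ <:+ t)
    (h : s₁.length ≤ s₂.length) : s₁ <:+ s₂ := by
  obtain ⟨u, rfl⟩ := h2
  induction u with
  | nil => exact h1
  | cons b u ih =>
    rcases List.suffix_cons_iff.mp h1 with he | hs
    · exfalso
      have : s₁.length = (u ++ s₂).length + 1 := by rw [he]; simp
      simp [List.length_append] at this
      omega
    · exact ih hs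

theorem exists_cons_suffix {l t : List A} (h : l <:+ t) (hne : l ≠ t) :
    ∃ b, (b :: l) <:+ t := by
  obtain ⟨u, rfl⟩ := h
  rcases List.eq_nil_or_concat u with rfl | ⟨v, b, rfl⟩
  · simp at hne
  · exact ⟨b, v, by simp [List.concat_eq_append]⟩

theorem suffix_antisymm {l t : List A} (h1 : l <:+ t) (h2 : t <:+ l) : l = t := by
  have hl : l.length = t.length := le_antisymm h1.length_le h2.length_le
  have := suffix_eq_drop h1
  rw [hl, Nat.sub_self, List.drop_zero] at this
  exact this

theorem eq_cons_of_suffix_succ {l t : List A} (h : l <:+ t) (hlen : t.length = l.length + 1) :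
    ∃ b, t = b :: l := by
  obtain ⟨u, rfl⟩ := h
  rcases u with _ | ⟨b, u'⟩
  · simp at hlen
  · have hu' : u' = [] := by
      simpa [List.length_append, List.length_cons] using hlen
    subst hu'; exact ⟨b, rfl⟩


/-! FPF basics -/

variable [Infinite A]

noncomputable def defA : A := Classical.arbitrary A

theorem FPF.le_def {p q : FPF A} : p ≤ q ↔ p.val ⊆ q.val := Iff.rfl

theorem FPF.lt_def {p q : FPF A} : p < q ↔ p.val ⊆ q.val ∧ p.val ≠ q.val := by
  rw [lt_iff_le_and_ne]
  exact and_congr Iff.rfl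
    ⟨fun hne hv => hne (Subtype.ext hv), fun hne hv => hne (congrArg Subtype.val hv)⟩

theorem mem_dom_iff {p : FPF A} {a : A} : a ∈ FPF.dom p ↔ ∃ b, (a, b) ∈ p.val := by
  constructor
  · rintro ⟨⟨x, y⟩, hxy, rfl⟩; exact ⟨y, hxy⟩
  · rintro ⟨b, hb⟩; exact ⟨(a, b), hb, rfl⟩

theorem dom_finite (p : FPF A) : (FPF.dom p).Finite := p.2.2.image _

theorem exists_fresh (p : FPF A) : ∃ a, a ∉ FPF.dom p := by
  obtain ⟨a, ha⟩ := ((dom_finite p).infinite_compl).nonempty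
  exact ⟨a, ha⟩

noncomputable def fval (p : FPF A) (y : A) : A :=
  if h : ∃ b, (y, b) ∈ p.val then h.choose else defA

theorem fval_eq {p : FPF A} {y b : A} (h : (y, b) ∈ p.val) : fval p y = b := by
  have hex : ∃ b, (y, b) ∈ p.val := ⟨b, h⟩
  rw [fval, dif_pos hex]
  exact p.2.1 hex.choose_spec h

theorem fval_out {p : FPF A} {y : A} (h : y ∉ FPF.dom p) : fval p y = defA :=
  dif_neg (fun hex => h (mem_dom_iff.mpr hex))

theorem agrees_fval (p : FPF A) : agrees (fval p) p := fun _ _ h => fval_eq h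

noncomputable def ext1 (p : FPF A) (x b : A) : FPF A :=
  if h : x ∈ FPF.dom p then p else
    ⟨insert (x, b) p.val, by
      constructor
      · rintro a c c' hc hc'
        rcases Set.mem_insert_iff.mp hc with h1 | h1 <;>
          rcases Set.mem_insert_iff.mp hc' with h2 | h2
        · rw [(Prod.mk.injEq _ _ _ _ ▸ h1 : a = x ∧ c = b).2,
            (Prod.mk.injEq _ _ _ _ ▸ h2 : a = x ∧ c' = b).2]
        · obtain ⟨rfl, rfl⟩ := Prod.mk.injEq _ _ _ _ ▸ h1
          exact absurd (mem_dom_iff.mpr ⟨c', h2⟩) h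
        · obtain ⟨rfl, rfl⟩ := Prod.mk.injEq _ _ _ _ ▸ h2
          exact absurd (mem_dom_iff.mpr ⟨c, h1⟩) h
        · exact p.2.1 h1 h2
      · exact p.2.2.insert _⟩

theorem ext1_val {p : FPF A} {x : A} (b : A) (hx : x ∉ FPF.dom p) :
    (ext1 p x b).val = insert (x, b) p.val := by rw [ext1, dif_neg hx]

theorem ext1_dom {p : FPF A} {x : A} (b : A) (hx : x ∉ FPF.dom p) :
    FPF.dom (ext1 p x b) = insert x (FPF.dom p) := by
  show Prod.fst '' (ext1 p x b).val = _
  rw [ext1_val b hx, Set.image_insert_eq]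
  rfl

/-! Moduli -/

variable (Φ : (A → A) → A)

def IsMod (β : A → A) (S : Finset A) : Prop :=
  ∀ γ : A → A, (∀ y ∈ S, γ y = β y) → Φ γ = Φ β

def HasMod : Prop := ∀ β : A → A, ∃ S : Finset A, IsMod Φ β S

theorem hasMod_of_continuous (hΦ : letI : TopologicalSpace A := ⊥; Continuous Φ) :
    HasMod Φ := by
  letI : TopologicalSpace A := ⊥
  haveI : DiscreteTopology A := ⟨rfl⟩
  intro β
  have hU : IsOpen (Φ ⁻¹' {Φ β}) := hΦ.isOpen_preimage _ (isOpen_discrete _)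
  obtain ⟨I, u, hu, hsub⟩ := isOpen_pi_iff.mp hU β rfl
  refine ⟨I, fun γ hγ => ?_⟩
  have hmem : γ ∈ (↑I : Set A).pi u := by
    intro a ha
    rw [hγ a ha]
    exact (hu a ha).2
  exact hsub hmem

def Deci (p : FPF A) : Prop := ∃ c, ∀ γ : A → A, agrees γ p → Φ γ = c

variable {Φ}

theorem wmod_aux (hc : HasMod Φ) (β : A → A) :
    ∃ S : Finset A, IsMod Φ β S ∧ ∀ S' : Finset A, IsMod Φ β S' → S.card ≤ S'.card := by
  classical
  have h : ∃ n : ℕ, ∃ S : Finset A, IsMod Φ β S ∧ S.card = n :=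
    ⟨(hc β).choose.card, (hc β).choose, (hc β).choose_spec, rfl⟩
  obtain ⟨S, hS, hcard⟩ := Nat.find_spec h
  exact ⟨S, hS, fun S' hS' => hcard ▸ Nat.find_min' h ⟨S', hS', rfl⟩⟩

noncomputable def Wmod (hc : HasMod Φ) (β : A → A) : Finset A := (wmod_aux hc β).choose

theorem Wmod_isMod (hc : HasMod Φ) (β : A → A) : IsMod Φ β (Wmod hc β) :=
  (wmod_aux hc β).choose_spec.1

theorem Wmod_min (hc : HasMod Φ) (β : A → A) {S : Finset A} (hS : IsMod Φ β S) :
    (Wmod hc β).card ≤ S.card := (wmod_aux hc β).choose_spec.2 S hS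



/-! the query selector -/

theorem nq_aux (p : FPF A) (dl : List A) :
    ∃ x : A, x ∉ FPF.dom p ∧
      ∀ i : ℕ, i < dl.length → dl.getD i defA ∉ FPF.dom p →
        ∃ j : ℕ, j < dl.length ∧ j ≤ i ∧ dl.getD j defA = x ∧
          ∀ j', j' < j → dl.getD j' defA ∈ FPF.dom p := by
  classical
  by_cases h : ∃ i : ℕ, i < dl.length ∧ dl.getD i defA ∉ FPF.dom p
  · obtain ⟨hlt, hmem⟩ := Nat.find_spec h
    refine ⟨dl.getD (Nat.find h) defA, hmem, ?_⟩
    intro i hi hnot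
    refine ⟨Nat.find h, hlt, Nat.find_min' h ⟨hi, hnot⟩, rfl, ?_⟩
    intro j' hlt'
    by_contra hd
    exact Nat.lt_irrefl _ (Nat.lt_of_lt_of_le hlt'
      (Nat.find_min' h ⟨lt_trans hlt' hlt, hd⟩))
  · obtain ⟨x, hx⟩ := exists_fresh p
    exact ⟨x, hx, fun i hi hnot => absurd ⟨i, hi, hnot⟩ h⟩

noncomputable def nq (p : FPF A) (dl : List A) : A := (nq_aux p dl).choose

theorem nq_not_mem (p : FPF A) (dl : List A) : nq p dl ∉ FPF.dom p :=
  (nq_aux p dl).choose_spec.1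

theorem nq_find {p : FPF A} {dl : List A} {i : ℕ} (hi : i < dl.length)
    (hnot : dl.getD i defA ∉ FPF.dom p) :
    ∃ j : ℕ, j < dl.length ∧ j ≤ i ∧ dl.getD j defA = nq p dl ∧
      ∀ j', j' < j → dl.getD j' defA ∈ FPF.dom p :=
  (nq_aux p dl).choose_spec.2 i hi hnot

/-! the strategy tree machinery -/

variable (hc : HasMod Φ)

noncomputable def stp : List A → FPF A × List A
  | [] => (FPF.empty A, (Wmod hc (fval (FPF.empty A))).toList)
  | b :: l =>
      let s := stp l
      let p' := ext1 s.1 (nq s.1 s.2) b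
      (p', s.2 ++ (Wmod hc (fval p')).toList)

noncomputable def nodeL (l : List A) : FPF A := (stp hc l).1
noncomputable def dlsL (l : List A) : List A := (stp hc l).2
noncomputable def qyL (l : List A) : A := nq (nodeL hc l) (dlsL hc l)

theorem node_nil : nodeL hc [] = FPF.empty A := rfl

theorem node_cons (b : A) (l : List A) :
    nodeL hc (b :: l) = ext1 (nodeL hc l) (qyL hc l) b := rfl

theorem dls_cons (b : A) (l : List A) :
    dlsL hc (b :: l) = dlsL hc l ++ (Wmod hc (fval (nodeL hc (b :: l)))).toList := rfl

theorem qy_not_mem (l : List A) : qyL hc l ∉ FPF.dom (nodeL hc l) := nq_not_mem _ _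

theorem node_cons_val (b : A) (l : List A) :
    (nodeL hc (b :: l)).val = insert (qyL hc l, b) (nodeL hc l).val := by
  rw [node_cons, ext1_val b (qy_not_mem hc l)]

theorem node_cons_dom (b : A) (l : List A) :
    FPF.dom (nodeL hc (b :: l)) = insert (qyL hc l) (FPF.dom (nodeL hc l)) := by
  rw [node_cons, ext1_dom b (qy_not_mem hc l)]

theorem node_mono {l l' : List A} (h : l <:+ l') : (nodeL hc l).val ⊆ (nodeL hc l').val := by
  obtain ⟨u, rfl⟩ := h
  induction u with
  | nil => exact subset_rfl
  | cons b u ih =>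
    rw [List.cons_append, node_cons_val]
    exact ih.trans (Set.subset_insert _ _)

theorem mem_node_of_cons_suffix {b : A} {l l' : List A} (h : (b :: l) <:+ l') :
    (qyL hc l, b) ∈ (nodeL hc l').val :=
  node_mono hc h (by rw [node_cons_val]; exact Set.mem_insert _ _)

theorem suffix_of_node_le : ∀ (l l' : List A),
    (nodeL hc l).val ⊆ (nodeL hc l').val → l <:+ l'
  | [], l', _ => List.nil_suffix
  | b :: m, l', hsub => by
    have hm : m <:+ l' := suffix_of_node_le m l'
      ((by rw [node_cons_val]; exact Set.subset_insert _ _ :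
          (nodeL hc m).val ⊆ (nodeL hc (b :: m)).val).trans hsub)
    by_cases he : m = l'
    · exfalso
      have hmem : (qyL hc m, b) ∈ (nodeL hc l').val :=
        hsub (by rw [node_cons_val]; exact Set.mem_insert _ _)
      rw [← he] at hmem
      exact qy_not_mem hc m (mem_dom_iff.mpr ⟨b, hmem⟩)
    · obtain ⟨c, hcs⟩ := exists_cons_suffix hm he
      have h1 : (qyL hc m, c) ∈ (nodeL hc l').val := mem_node_of_cons_suffix hc hcs
      have h2 : (qyL hc m, b) ∈ (nodeL hc l').val :=
        hsub (by rw [node_cons_val]; exact Set.mem_insert _ _)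
      have hbc : b = c := (nodeL hc l').2.1 h2 h1
      rw [hbc]; exact hcs

theorem node_le_iff {l l' : List A} : nodeL hc l ≤ nodeL hc l' ↔ l <:+ l' :=
  ⟨fun h => suffix_of_node_le hc l l' h, fun h => node_mono hc h⟩

theorem node_inj {l l' : List A} (h : nodeL hc l = nodeL hc l') : l = l' :=
  suffix_antisymm (suffix_of_node_le hc l l' (congrArg Subtype.val h).le)
    (suffix_of_node_le hc l' l (congrArg Subtype.val h.symm).le)

theorem node_lt_iff {l l' : List A} : nodeL hc l < nodeL hc l' ↔ l <:+ l' ∧ l ≠ l' := by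
  constructor
  · intro h
    exact ⟨suffix_of_node_le hc l l' h.le, fun he => absurd (congrArg (nodeL hc) he) h.ne⟩
  · rintro ⟨hs, hne⟩
    exact lt_of_le_of_ne (node_mono hc hs) (fun he => hne (node_inj hc he))



/-! the tree -/

theorem proper_suffix_length_lt {l t : List A} (h : l <:+ t) (hne : l ≠ t) :
    l.length < t.length := by
  rcases Nat.lt_or_ge l.length t.length with h' | h'
  · exact h'
  · exact absurd (suffix_antisymm (suffix_of_suffix_length_le (List.suffix_refl t) h h') h).symm hne

def ValidL (l : List A) : Prop :=
  ∀ l', l' <:+ l → l' ≠ l → ¬ Deci Φ (nodeL hc l')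

def Ttr : Set (FPF A) := {p | ∃ l, ValidL hc l ∧ nodeL hc l = p}

theorem valid_nil : ValidL hc ([] : List A) := by
  intro l' hs hne
  exact absurd (List.suffix_nil.mp hs) hne

theorem valid_suffix {l l' : List A} (hv : ValidL hc l) (hs : l' <:+ l) : ValidL hc l' := by
  intro m hm hne
  refine hv m (hm.trans hs) (fun he => hne ?_)
  subst he
  exact (suffix_antisymm hs hm).symm

theorem valid_cons {l : List A} (hv : ValidL hc l) (hnd : ¬ Deci Φ (nodeL hc l)) (b : A) :
    ValidL hc (b :: l) := by
  intro l' hs hne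
  rcases List.suffix_cons_iff.mp hs with he | hs'
  · exact absurd he hne
  · by_cases he : l' = l
    · subst he; exact hnd
    · exact hv l' hs' he

theorem node_mem_T {l : List A} (hv : ValidL hc l) : nodeL hc l ∈ Ttr hc := ⟨l, hv, rfl⟩

theorem leaf_iff {l : List A} (hv : ValidL hc l) :
    IsLeaf (Ttr hc) (nodeL hc l) ↔ Deci Φ (nodeL hc l) := by
  constructor
  · intro hleaf
    by_contra hnd
    refine hleaf.2 ⟨nodeL hc (defA :: l), node_mem_T hc (valid_cons hc hv hnd defA), ?_⟩
    exact (node_lt_iff hc).mpr ⟨List.suffix_cons _ _, by simp⟩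
  · intro hd
    refine ⟨node_mem_T hc hv, ?_⟩
    rintro ⟨q, ⟨lq, hlqv, rfl⟩, hlt⟩
    obtain ⟨hs, hne⟩ := (node_lt_iff hc).mp hlt
    exact hlqv l hs hne hd

theorem T_isTreeOn : IsTreeOn (FPF.empty A) (Ttr hc) := by
  refine ⟨node_mem_T hc (valid_nil hc), ?_, ?_⟩
  · rintro p ⟨l, hv, rfl⟩
    exact (Set.empty_subset _ : (FPF.empty A).val ⊆ _)
  · rintro p ⟨l, hv, rfl⟩ x ⟨⟨lx, hvx, rfl⟩, hxle⟩ y ⟨⟨ly, hvy, rfl⟩, hyle⟩ hne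
    have hx : lx <:+ l := suffix_of_node_le hc _ _ hxle
    have hy : ly <:+ l := suffix_of_node_le hc _ _ hyle
    rcases le_total lx.length ly.length with h | h
    · exact Or.inl (node_mono hc (suffix_of_suffix_length_le hx hy h))
    · exact Or.inr (node_mono hc (suffix_of_suffix_length_le hy hx h))

theorem T_isTotal : IsTotalSeqTree (Ttr hc) := by
  refine ⟨T_isTreeOn hc, ?_⟩
  rintro p ⟨l, hv, rfl⟩ hnl
  have hnd : ¬ Deci Φ (nodeL hc l) := fun hd => hnl ((leaf_iff hc hv).mpr hd)
  refine ⟨qyL hc l, qy_not_mem hc l, ?_⟩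
  intro q
  constructor
  · rintro ⟨⟨lq, hvq, rfl⟩, hlt, hmid⟩
    obtain ⟨hs, hne⟩ := (node_lt_iff hc).mp hlt
    have hl1 : l.length < lq.length := proper_suffix_length_lt hs hne
    have hlen : lq.length = l.length + 1 := by
      by_contra hlen
      set mid : List A := lq.drop (lq.length - (l.length + 1)) with hmiddef
      have hmids : mid <:+ lq := List.drop_suffix _ _
      have hmidlen : mid.length = l.length + 1 := by
        rw [hmiddef, List.length_drop]; omega
      have hlm : l <:+ mid := suffix_of_suffix_length_le hs hmids (by omega)
      have hne1 : l ≠ mid := fun he => by rw [← he] at hmidlen; omega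
      have hne2 : mid ≠ lq := fun he => by rw [he] at hmidlen; omega
      exact hmid ⟨nodeL hc mid, node_mem_T hc (valid_suffix hc hvq hmids),
        (node_lt_iff hc).mpr ⟨hlm, hne1⟩, (node_lt_iff hc).mpr ⟨hmids, hne2⟩⟩
    obtain ⟨b, rfl⟩ := eq_cons_of_suffix_succ hs hlen
    exact ⟨hlt, node_cons_dom hc b l⟩
  · rintro ⟨hlt, hdom⟩
    have hmemq : qyL hc l ∈ FPF.dom q := hdom ▸ Set.mem_insert _ _
    obtain ⟨b, hb⟩ := mem_dom_iff.mp hmemq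
    have hq : q = nodeL hc (b :: l) := by
      apply Subtype.ext
      rw [node_cons_val]
      apply Set.eq_of_subset_of_subset
      · rintro ⟨y, c⟩ hyc
        have hy : y ∈ FPF.dom q := mem_dom_iff.mpr ⟨c, hyc⟩
        rw [hdom] at hy
        rcases Set.mem_insert_iff.mp hy with rfl | hy
        · have hcb : c = b := q.2.1 hyc hb
          rw [hcb]; exact Set.mem_insert _ _
        · obtain ⟨c', hc'⟩ := mem_dom_iff.mp hy
          have hcc : c = c' := q.2.1 hyc (hlt.le hc')
          rw [hcc]; exact Set.mem_insert_of_mem _ hc'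
      · rintro ⟨y, c⟩ hyc
        rcases Set.mem_insert_iff.mp hyc with he | hyc'
        · obtain ⟨rfl, rfl⟩ := Prod.mk.injEq _ _ _ _ ▸ he
          exact hb
        · exact hlt.le hyc'
    subst hq
    refine ⟨node_mem_T hc (valid_cons hc hv hnd b), hlt, ?_⟩
    rintro ⟨t, ⟨lt', hvt, rfl⟩, h1, h2⟩
    obtain ⟨hs1, hne1⟩ := (node_lt_iff hc).mp h1
    obtain ⟨hs2, hne2⟩ := (node_lt_iff hc).mp h2
    have e1 : l.length < lt'.length := proper_suffix_length_lt hs1 hne1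
    have e2 : lt'.length < (b :: l).length := proper_suffix_length_lt hs2 hne2
    simp at e2
    omega


/-! combinatorial helpers -/

theorem exists_strictMono_mem {s : Set ℕ} (hs : s.Infinite) :
    ∃ e : ℕ → ℕ, StrictMono e ∧ ∀ n, e n ∈ s :=
  ⟨Nat.nth (· ∈ s), Nat.nth_strictMono hs, fun n => Nat.nth_mem_of_infinite hs n⟩

theorem exists_infinite_fiber (f : ℕ → ℕ) (B : ℕ) (hf : ∀ n, f n ≤ B) :
    ∃ t, {n | f n = t}.Infinite := by
  by_contra h
  push_neg at h
  have hfin : ∀ t, {n | f n = t}.Finite := fun t => h t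
  have huniv : (Set.univ : Set ℕ) ⊆ ⋃ t ∈ Finset.range (B + 1), {n | f n = t} := by
    intro n _
    exact Set.mem_biUnion (Finset.mem_range.mpr (Nat.lt_succ_of_le (hf n))) rfl
  exact Set.infinite_univ
    (((Finset.range (B + 1)).finite_toSet.biUnion (fun t _ => hfin t)).subset huniv)

theorem exists_subseq_ne (g : ℕ → Finset A) (N : ℕ)
    (hfin : ∀ W, {k | N ≤ k ∧ g k = W}.Finite) :
    ∃ e : ℕ → ℕ, StrictMono e ∧ (∀ j, N ≤ e j) ∧ Function.Injective (g ∘ e) := by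
  classical
  have hstep : ∀ x : ℕ × Finset (Finset A), ∃ n, x.1 < n ∧ N ≤ n ∧ g n ∉ x.2 := by
    intro x
    have hbad : (Set.Iic x.1 ∪ Set.Iio N ∪ ⋃ W ∈ x.2, {k | N ≤ k ∧ g k = W}).Finite :=
      ((Set.finite_Iic _).union (Set.finite_Iio _)).union
        (x.2.finite_toSet.biUnion (fun W _ => hfin W))
    obtain ⟨n, hn⟩ := hbad.infinite_compl.nonempty
    simp only [Set.mem_compl_iff, Set.mem_union, Set.mem_Iic, Set.mem_Iio, Set.mem_iUnion,
      Set.mem_setOf_eq, not_or, not_exists, not_and] at hn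
    obtain ⟨⟨h1, h2⟩, h3⟩ := hn
    refine ⟨n, by omega, by omega, fun hmem => ?_⟩
    exact h3 (g n) hmem (by omega) rfl
  let step : ℕ × Finset (Finset A) → ℕ × Finset (Finset A) :=
    fun x => ⟨(hstep x).choose, insert (g (hstep x).choose) x.2⟩
  let u : ℕ → ℕ × Finset (Finset A) := fun j => step^[j] (0, ∅)
  have hu : ∀ j, u (j + 1) = step (u j) := fun j => Function.iterate_succ_apply' _ _ _
  let e : ℕ → ℕ := fun j => (u (j + 1)).1
  have he : ∀ j, e j = (hstep (u j)).choose := fun j => by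
    show (u (j+1)).1 = _
    rw [hu j]
  have h2 : ∀ j, (u (j + 1)).2 = insert (g (e j)) (u j).2 := fun j => by
    rw [hu j, he j]
  have hN : ∀ j, N ≤ e j := fun j => (he j) ▸ (hstep (u j)).choose_spec.2.1
  have hmonou : ∀ i j, i ≤ j → (u i).2 ⊆ (u j).2 := by
    intro i j hij
    induction j with
    | zero => have : i = 0 := by omega
              subst this; exact subset_rfl
    | succ j ihj =>
      rcases Nat.lt_or_ge i (j + 1) with h | h
      · exact (ihj (by omega)).trans (by rw [h2 j]; exact Finset.subset_insert _ _)
      · have : i = j + 1 := by omega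
        subst this; exact subset_rfl
  have hmem : ∀ i, g (e i) ∈ (u (i + 1)).2 := fun i => by
    rw [h2 i]; exact Finset.mem_insert_self _ _
  have hnot : ∀ j, g (e j) ∉ (u j).2 := fun j => (he j) ▸ (hstep (u j)).choose_spec.2.2
  have hne : ∀ i j, i < j → g (e i) ≠ g (e j) := by
    intro i j hij hcontra
    exact hnot j (hcontra ▸ hmonou (i + 1) j (by omega) (hmem i))
  refine ⟨e, strictMono_nat_of_lt_succ ?_, hN, ?_⟩
  · intro j
    have := (hstep (u (j + 1))).choose_spec.1
    rw [← he (j + 1)] at this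
    exact this
  · intro i j hgij
    by_contra hij
    rcases Nat.lt_or_ge i j with h | h
    · exact hne i j h hgij
    · exact hne j i (by omega) hgij.symm

theorem delta_system : ∀ (s : ℕ) (F : ℕ → Finset A), (∀ n, (F n).card = s) →
    Function.Injective F →
    ∃ (R : Finset A) (e : ℕ → ℕ), StrictMono e ∧ (∀ n, R ⊆ F (e n)) ∧
      ∀ n m, n ≠ m → ∀ x, x ∈ F (e n) \ R → x ∉ F (e m) \ R := by
  intro s
  induction s with
  | zero =>
    intro F hcard hinj
    exfalso
    have h01 : F 0 = F 1 := by
      rw [Finset.card_eq_zero.mp (hcard 0), Finset.card_eq_zero.mp (hcard 1)]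
    exact absurd (hinj h01) (by norm_num)
  | succ s ih =>
    intro F hcard hinj
    classical
    by_cases hA : ∃ a, {n | a ∈ F n}.Infinite
    · obtain ⟨a, ha⟩ := hA
      obtain ⟨e0, he0mono, he0mem⟩ := exists_strictMono_mem ha
      have hamem : ∀ n, a ∈ F (e0 n) := fun n => he0mem n
      have hcard' : ∀ n, ((F (e0 n)).erase a).card = s := by
        intro n
        rw [Finset.card_erase_of_mem (hamem n), hcard]
        rfl
      have hins : ∀ n, insert a ((F (e0 n)).erase a) = F (e0 n) :=
        fun n => Finset.insert_erase (hamem n)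
      have hinj' : Function.Injective (fun n => (F (e0 n)).erase a) := by
        intro n m h
        have hfe : F (e0 n) = F (e0 m) := by rw [← hins n, ← hins m]; simp only at h; rw [h]
        exact he0mono.injective (hinj hfe)
      obtain ⟨R', e', hmono', hsub', hdisj'⟩ := ih (fun n => (F (e0 n)).erase a) hcard' hinj'
      refine ⟨insert a R', e0 ∘ e', he0mono.comp hmono', ?_, ?_⟩
      · intro n x hx
        rcases Finset.mem_insert.mp hx with rfl | hx
        · exact hamem _
        · exact (Finset.erase_subset _ _) (hsub' n hx)
      · intro n m hnm x hx hx2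
        have htr : ∀ k (y : A), y ∈ F (e0 (e' k)) \ insert a R' ↔
            y ∈ (F (e0 (e' k))).erase a \ R' := by
          intro k y
          simp only [Finset.mem_sdiff, Finset.mem_insert, not_or, Finset.mem_erase]
          tauto
        exact (hdisj' n m hnm x ((htr n x).mp hx)) ((htr m x).mp hx2)
    · push_neg at hA
      have hAfin : ∀ a, {n | a ∈ F n}.Finite := fun a => hA a
      have hstep : ∀ x : ℕ × Finset A, ∃ n, x.1 < n ∧ ∀ y ∈ x.2, y ∉ F n := by
        intro x
        have hbad : (Set.Iic x.1 ∪ ⋃ y ∈ x.2, {n | y ∈ F n}).Finite :=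
          (Set.finite_Iic _).union (x.2.finite_toSet.biUnion (fun y _ => hAfin y))
        obtain ⟨n, hn⟩ := hbad.infinite_compl.nonempty
        simp only [Set.mem_compl_iff, Set.mem_union, Set.mem_Iic, Set.mem_iUnion,
          Set.mem_setOf_eq, not_or, not_exists] at hn
        exact ⟨n, by omega, fun y hy hmem => hn.2 y hy hmem⟩
      let step : ℕ × Finset A → ℕ × Finset A :=
        fun x => ⟨(hstep x).choose, x.2 ∪ F (hstep x).choose⟩
      let u : ℕ → ℕ × Finset A := fun j => step^[j] (0, F 0)
      have hu : ∀ j, u (j + 1) = step (u j) := fun j => Function.iterate_succ_apply' _ _ _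
      let e : ℕ → ℕ := fun j => (u (j + 1)).1
      have he : ∀ j, e j = (hstep (u j)).choose := fun j => by
        show (u (j+1)).1 = _
        rw [hu j]
      have h2 : ∀ j, (u (j + 1)).2 = (u j).2 ∪ F (e j) := fun j => by
        rw [hu j, he j]
      have hmonou : ∀ i j, i ≤ j → (u i).2 ⊆ (u j).2 := by
        intro i j hij
        induction j with
        | zero => have : i = 0 := by omega
                  subst this; exact subset_rfl
        | succ j ihj =>
          rcases Nat.lt_or_ge i (j + 1) with h | h
          · exact (ihj (by omega)).trans (by rw [h2 j]; exact Finset.subset_union_left)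
          · have : i = j + 1 := by omega
            subst this; exact subset_rfl
      have hmem : ∀ i, F (e i) ⊆ (u (i + 1)).2 := fun i => by
        rw [h2 i]; exact Finset.subset_union_right
      have hnot : ∀ j, ∀ y ∈ (u j).2, y ∉ F (e j) := fun j => by
        rw [he j]; exact (hstep (u j)).choose_spec.2
      have hdisj : ∀ i j, i < j → ∀ y ∈ F (e i), y ∉ F (e j) := by
        intro i j hij y hy
        exact hnot j y (hmonou (i + 1) j (by omega) (hmem i hy))
      refine ⟨∅, e, strictMono_nat_of_lt_succ ?_, fun n => Finset.empty_subset _, ?_⟩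
      · intro j
        have := (hstep (u (j + 1))).choose_spec.1
        rw [← he (j + 1)] at this
        exact this
      · intro n m hnm x hx hx2
        simp only [Finset.sdiff_empty] at hx hx2
        rcases Nat.lt_or_ge n m with h | h
        · exact hdisj n m h x hx hx2
        · exact hdisj m n (by omega) x hx2 hx


/-! the limit point of a branch -/

noncomputable def limF (hc : HasMod Φ) (Lb : ℕ → List A) : A → A := fun y =>
  if h : ∃ kb : ℕ × A, (y, kb.2) ∈ (nodeL hc (Lb kb.1)).val then h.choose.2 else defA

theorem limF_eq {hc : HasMod Φ} {Lb : ℕ → List A}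
    (hmono : ∀ k m, k ≤ m → (nodeL hc (Lb k)).val ⊆ (nodeL hc (Lb m)).val)
    {k : ℕ} {y b : A} (hb : (y, b) ∈ (nodeL hc (Lb k)).val) : limF hc Lb y = b := by
  have hex : ∃ kb : ℕ × A, (y, kb.2) ∈ (nodeL hc (Lb kb.1)).val := ⟨(k, b), hb⟩
  simp only [limF]
  rw [dif_pos hex]
  have h1 := hmono hex.choose.1 (max hex.choose.1 k) (le_max_left _ _) hex.choose_spec
  have h2 := hmono k (max hex.choose.1 k) (le_max_right _ _) hb
  exact (nodeL hc (Lb (max hex.choose.1 k))).2.1 h1 h2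

theorem limF_out {hc : HasMod Φ} {Lb : ℕ → List A} {y : A}
    (hy : ∀ k, y ∉ FPF.dom (nodeL hc (Lb k))) : limF hc Lb y = defA := by
  simp only [limF]
  rw [dif_neg]
  rintro ⟨⟨k, b⟩, hkb⟩
  exact hy k (mem_dom_iff.mpr ⟨b, hkb⟩)

/-! no infinite branch -/

theorem branch_false (hc : HasMod Φ) (Lb : ℕ → List A)
    (hstepL : ∀ k, ∃ b, Lb (k + 1) = b :: Lb k)
    (hnd : ∀ k, ¬ Deci Φ (nodeL hc (Lb k))) : False := by
  classical
  have hsfx : ∀ k m, k ≤ m → Lb k <:+ Lb m := by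
    intro k m hkm
    induction m with
    | zero =>
      have hk0 : k = 0 := by omega
      subst hk0; exact List.suffix_refl _
    | succ m ih =>
      rcases Nat.lt_or_ge k (m + 1) with h | h
      · obtain ⟨b, hb⟩ := hstepL m
        exact (ih (by omega)).trans (by rw [hb]; exact List.suffix_cons _ _)
      · have hk : k = m + 1 := by omega
        subst hk; exact List.suffix_refl _
  have hmono : ∀ k m, k ≤ m → (nodeL hc (Lb k)).val ⊆ (nodeL hc (Lb m)).val :=
    fun k m h => node_mono hc (hsfx k m h)
  have hdmono : ∀ k m, k ≤ m → FPF.dom (nodeL hc (Lb k)) ⊆ FPF.dom (nodeL hc (Lb m)) := by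
    intro k m h y hy
    obtain ⟨b, hb⟩ := mem_dom_iff.mp hy
    exact mem_dom_iff.mpr ⟨b, hmono k m h hb⟩
  set αi : A → A := limF hc Lb with hαidef
  set β : ℕ → A → A := fun k => fval (nodeL hc (Lb k)) with hβdef
  have hβy : ∀ k y, y ∈ FPF.dom (nodeL hc (Lb k)) → β k y = αi y := by
    intro k y hy
    obtain ⟨b, hb⟩ := mem_dom_iff.mp hy
    show fval (nodeL hc (Lb k)) y = limF hc Lb y
    rw [fval_eq hb, limF_eq hmono hb]
  have hβout : ∀ k y, (∀ m, y ∉ FPF.dom (nodeL hc (Lb m))) → β k y = αi y := by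
    intro k y hy
    show fval (nodeL hc (Lb k)) y = limF hc Lb y
    rw [fval_out (hy k), limF_out hy]
  have hagree : ∀ S : Finset A, ∃ N, ∀ k, N ≤ k → ∀ y ∈ S, β k y = αi y := by
    intro S
    induction S using Finset.induction_on with
    | empty => exact ⟨0, fun k _ y hy => absurd hy (Finset.notMem_empty y)⟩
    | @insert a S ha ih =>
      obtain ⟨N, hN⟩ := ih
      by_cases hcase : ∃ k₀, a ∈ FPF.dom (nodeL hc (Lb k₀))
      · obtain ⟨k₀, hk₀⟩ := hcase
        refine ⟨max N k₀, fun k hk y hy => ?_⟩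
        rcases Finset.mem_insert.mp hy with rfl | hy
        · exact hβy k y (hdmono k₀ k (le_trans (le_max_right _ _) hk) hk₀)
        · exact hN k (le_trans (le_max_left _ _) hk) y hy
      · push_neg at hcase
        refine ⟨N, fun k hk y hy => ?_⟩
        rcases Finset.mem_insert.mp hy with rfl | hy
        · exact hβout k y hcase
        · exact hN k hk y hy
  obtain ⟨Sstar, hSstar⟩ := hc αi
  obtain ⟨N, hN⟩ := hagree Sstar
  have hβc : ∀ k, N ≤ k → Φ (β k) = Φ αi :=
    fun k hk => hSstar (β k) (fun y hy => hN k hk y hy)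
  have hβmodstar : ∀ k, N ≤ k → IsMod Φ (β k) Sstar := by
    intro k hk γ hγ
    rw [hβc k hk]
    exact hSstar γ (fun y hy => (hγ y hy).trans (hN k hk y hy))
  have hWcard : ∀ k, N ≤ k → (Wmod hc (β k)).card ≤ Sstar.card :=
    fun k hk => Wmod_min hc (β k) (hβmodstar k hk)
  -- demand lists
  have hWsfx : ∀ l : List A, (Wmod hc (fval (nodeL hc l))).toList <:+ dlsL hc l := by
    intro l
    cases l with
    | nil => exact List.suffix_refl _
    | cons b l => rw [dls_cons]; exact ⟨dlsL hc l, rfl⟩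
  have hdlpfx : ∀ k m, k ≤ m → dlsL hc (Lb k) <+: dlsL hc (Lb m) := by
    intro k m hkm
    induction m with
    | zero =>
      have hk0 : k = 0 := by omega
      subst hk0; exact List.prefix_refl _
    | succ m ih =>
      rcases Nat.lt_or_ge k (m + 1) with h | h
      · refine (ih (by omega)).trans ?_
        obtain ⟨b, hb⟩ := hstepL m
        rw [hb, dls_cons]
        exact List.prefix_append _ _
      · have hk : k = m + 1 := by omega
        subst hk; exact List.prefix_refl _
  have hWdls : ∀ k, ∀ y ∈ Wmod hc (β k), y ∈ dlsL hc (Lb k) := by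
    intro k y hy
    exact (hWsfx (Lb k)).subset (Finset.mem_toList.mpr hy)
  have hgetD : ∀ {l₁ l₂ : List A}, l₁ <+: l₂ → ∀ i, i < l₁.length →
      l₂.getD i defA = l₁.getD i defA := by
    rintro l₁ l₂ ⟨u, rfl⟩ i hi
    rw [List.getD_eq_getElem?_getD, List.getD_eq_getElem?_getD, List.getElem?_append_left hi]
  -- fairness
  have hfair : ∀ k, ∀ y ∈ Wmod hc (β k), ∃ m, y ∈ FPF.dom (nodeL hc (Lb m)) := by
    intro k y hyW
    by_contra hnev
    push_neg at hnev
    have hym : y ∈ dlsL hc (Lb k) := hWdls k y hyW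
    obtain ⟨j, hj, hjy⟩ : ∃ j, j < (dlsL hc (Lb k)).length ∧
        (dlsL hc (Lb k)).getD j defA = y := by
      obtain ⟨⟨j, hj⟩, hget⟩ := List.mem_iff_get.mp hym
      refine ⟨j, hj, ?_⟩
      rw [List.getD_eq_getElem?_getD, List.getElem?_eq_getElem hj]
      simpa using hget
    have hlenm : ∀ m, k ≤ m → j < (dlsL hc (Lb m)).length :=
      fun m hm => lt_of_lt_of_le hj (hdlpfx k m hm).length_le
    have hsta : ∀ m, k ≤ m → (dlsL hc (Lb m)).getD j defA = y :=
      fun m hm => by rw [hgetD (hdlpfx k m hm) j hj, hjy]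
    have hptr : ∀ m, k ≤ m → ∃ i, i ≤ j ∧ (dlsL hc (Lb m)).getD i defA = qyL hc (Lb m) ∧
        ∀ i', i' < i → (dlsL hc (Lb m)).getD i' defA ∈ FPF.dom (nodeL hc (Lb m)) := by
      intro m hm
      have hnm : (dlsL hc (Lb m)).getD j defA ∉ FPF.dom (nodeL hc (Lb m)) := by
        rw [hsta m hm]; exact hnev m
      obtain ⟨i, _, hi2, hi3, hi4⟩ := nq_find (hlenm m hm) hnm
      exact ⟨i, hi2, hi3, hi4⟩
    choose! ptr hptr1 hptr2 hptr3 using hptr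
    have hinc : ∀ m, k ≤ m → ptr m < ptr (m + 1) := by
      intro m hm
      by_contra hle
      push_neg at hle
      have hq : (dlsL hc (Lb (m + 1))).getD (ptr (m + 1)) defA = qyL hc (Lb (m + 1)) :=
        hptr2 (m + 1) (by omega)
      have hmem : (dlsL hc (Lb (m + 1))).getD (ptr (m + 1)) defA ∈
          FPF.dom (nodeL hc (Lb (m + 1))) := by
        rcases Nat.lt_or_ge (ptr (m + 1)) (ptr m) with h | h
        · have hidx : ptr (m + 1) < (dlsL hc (Lb m)).length :=
            lt_trans (lt_of_lt_of_le h (hptr1 m hm)) (hlenm m hm)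
          rw [hgetD (hdlpfx m (m + 1) (by omega)) _ hidx]
          exact hdmono m (m + 1) (by omega) (hptr3 m hm _ h)
        · have heq : ptr (m + 1) = ptr m := by omega
          rw [heq]
          have hidx : ptr m < (dlsL hc (Lb m)).length :=
            lt_of_le_of_lt (hptr1 m hm) (hlenm m hm)
          rw [hgetD (hdlpfx m (m + 1) (by omega)) _ hidx, hptr2 m hm]
          obtain ⟨b, hb⟩ := hstepL m
          rw [hb, node_cons_dom]
          exact Set.mem_insert _ _
      rw [hq] at hmem
      exact qy_not_mem hc (Lb (m + 1)) hmem
    have hgrow : ∀ d, ptr k + d ≤ ptr (k + d) := by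
      intro d
      induction d with
      | zero => simp
      | succ d ih =>
        have h1 := hinc (k + d) (by omega)
        have h3 : ptr (k + (d + 1)) = ptr (k + d + 1) := rfl
        omega
    have h1 := hgrow (j + 1)
    have h2 := hptr1 (k + (j + 1)) (by omega)
    omega
  have hdec : ∀ k (W : Finset A), IsMod Φ (β k) W →
      (∀ y ∈ W, y ∈ FPF.dom (nodeL hc (Lb k))) → Deci Φ (nodeL hc (Lb k)) := by
    intro k W hW hsub
    refine ⟨Φ (β k), fun γ hγ => hW γ ?_⟩
    intro y hy
    obtain ⟨b, hb⟩ := mem_dom_iff.mp (hsub y hy)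
    rw [hγ hb]
    exact (fval_eq hb).symm
  have hdomup : ∀ S : Finset A, (∀ y ∈ S, ∃ m, y ∈ FPF.dom (nodeL hc (Lb m))) →
      ∃ M, ∀ y ∈ S, y ∈ FPF.dom (nodeL hc (Lb M)) := by
    intro S
    induction S using Finset.induction_on with
    | empty => exact fun _ => ⟨0, fun y hy => absurd hy (Finset.notMem_empty y)⟩
    | @insert a S ha ih =>
      intro hS
      obtain ⟨M, hM⟩ := ih (fun y hy => hS y (Finset.mem_insert_of_mem hy))
      obtain ⟨m₀, hm₀⟩ := hS a (Finset.mem_insert_self _ _)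
      refine ⟨max M m₀, fun y hy => ?_⟩
      rcases Finset.mem_insert.mp hy with rfl | hy
      · exact hdmono m₀ _ (le_max_right _ _) hm₀
      · exact hdmono M _ (le_max_left _ _) (hM y hy)
  by_cases hrec : ∃ W : Finset A, {k | N ≤ k ∧ Wmod hc (β k) = W}.Infinite
  · obtain ⟨W, hWinf⟩ := hrec
    obtain ⟨k₁, hk₁⟩ := hWinf.nonempty
    obtain ⟨M, hM⟩ := hdomup W (fun y hy => hfair k₁ y (by rw [hk₁.2]; exact hy))
    obtain ⟨k₂, hk₂, hk₂M⟩ : ∃ k₂, (N ≤ k₂ ∧ Wmod hc (β k₂) = W) ∧ M ≤ k₂ := by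
      by_contra hcon
      push_neg at hcon
      refine hWinf (Set.Finite.subset (Set.finite_Iio M) ?_)
      intro k hk
      exact hcon k hk
    exact hnd k₂ (hdec k₂ (Wmod hc (β k₂)) (Wmod_isMod hc (β k₂))
      (by rw [hk₂.2]; exact fun y hy => hdmono M k₂ hk₂M (hM y hy)))
  · push_neg at hrec
    have hfin : ∀ W : Finset A, {k | N ≤ k ∧ Wmod hc (β k) = W}.Finite :=
      fun W => hrec W
    obtain ⟨e1, he1mono, he1N, he1inj⟩ := exists_subseq_ne (fun k => Wmod hc (β k)) N hfin
    obtain ⟨t, ht⟩ := exists_infinite_fiber (fun j => (Wmod hc (β (e1 j))).card) Sstar.card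
      (fun j => hWcard _ (he1N j))
    obtain ⟨e2, he2mono, he2mem⟩ := exists_strictMono_mem ht
    obtain ⟨R, e3, he3mono, hRsub, hdisj⟩ := delta_system t (fun i => Wmod hc (β (e1 (e2 i))))
      (fun i => he2mem i) (fun i j h => he2mono.injective (he1inj h))
    set idx : ℕ → ℕ := fun i => e1 (e2 (e3 i)) with hidxdef
    have hidxmono : StrictMono idx := he1mono.comp (he2mono.comp he3mono)
    have hidxN : ∀ i, N ≤ idx i := fun i => he1N _
    have hidxge : ∀ i, i ≤ idx i := fun i => hidxmono.le_apply
    obtain ⟨M, hM⟩ := hdomup R (fun y hy => hfair (idx 0) y (hRsub 0 hy))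
    have hndM := hnd M
    rw [Deci] at hndM
    push_neg at hndM
    obtain ⟨γb, hγagr, hγne⟩ := hndM (Φ αi)
    obtain ⟨Sb, hSb⟩ := hc γb
    have hkey : ∀ i, M ≤ idx i → ∃ y, y ∈ Sb ∧ y ∈ Wmod hc (β (idx i)) \ R := by
      intro i hi
      by_contra hno
      push_neg at hno
      set γs : A → A := fun y => if y ∈ Sb then γb y else β (idx i) y with hγsdef
      have h1 : Φ γs = Φ γb := hSb γs (fun y hy => by rw [hγsdef]; simp [hy])
      have h2 : Φ γs = Φ (β (idx i)) := by
        refine Wmod_isMod hc (β (idx i)) γs ?_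
        intro y hy
        by_cases hyS : y ∈ Sb
        · have hyR : y ∈ R := by
            by_contra hR
            exact (hno y hyS) (Finset.mem_sdiff.mpr ⟨hy, hR⟩)
          obtain ⟨b, hb⟩ := mem_dom_iff.mp (hM y hyR)
          have hbi : (y, b) ∈ (nodeL hc (Lb (idx i))).val := hmono M (idx i) hi hb
          rw [hγsdef]
          simp only [if_pos hyS]
          rw [hγagr hb]
          exact (fval_eq hbi).symm
        · rw [hγsdef]; simp [hyS]
      exact hγne (by rw [← h1, h2]; exact hβc (idx i) (hidxN i))
    have hys : ∀ d : ℕ, ∃ y, y ∈ Sb ∧ y ∈ Wmod hc (β (idx (M + d))) \ R :=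
      fun d => hkey (M + d) (le_trans (Nat.le_add_right M d) (hidxge (M + d)))
    choose ys hysSb hysW using hys
    have hysinj : Function.Injective ys := by
      intro d d' he
      by_contra hdd
      have hne : M + d ≠ M + d' := by omega
      exact (hdisj (M + d) (M + d') hne (ys d) (hysW d)) (by rw [he]; exact hysW d')
    have hcount : (Finset.range (Sb.card + 1)).card ≤ Sb.card :=
      Finset.card_le_card_of_injOn ys (fun d _ => hysSb d) (hysinj.injOn)
    rw [Finset.card_range] at hcount
    omega


theorem T_wellFounded (hc : HasMod Φ) : WellFoundedTree (Ttr hc) := by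
  rintro ⟨f, hfT, hfmono⟩
  choose lf hlfv hlfn using hfT
  have hlt : ∀ n, nodeL hc (lf n) < nodeL hc (lf (n + 1)) := by
    intro n
    rw [hlfn n, hlfn (n + 1)]
    exact hfmono (Nat.lt_succ_self n)
  have hsfx : ∀ n, lf n <:+ lf (n + 1) ∧ lf n ≠ lf (n + 1) :=
    fun n => (node_lt_iff hc).mp (hlt n)
  have hlen : ∀ n, (lf n).length < (lf (n + 1)).length :=
    fun n => proper_suffix_length_lt (hsfx n).1 (hsfx n).2
  have hlege : ∀ n, n ≤ (lf n).length := by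
    intro n
    induction n with
    | zero => omega
    | succ n ih => have := hlen n; omega
  have hsfx2 : ∀ k m, k ≤ m → lf k <:+ lf m := by
    intro k m hkm
    induction m with
    | zero =>
      have hk0 : k = 0 := by omega
      subst hk0; exact List.suffix_refl _
    | succ m ih =>
      rcases Nat.lt_or_ge k (m + 1) with h | h
      · exact (ih (by omega)).trans (hsfx m).1
      · have hk : k = m + 1 := by omega
        subst hk; exact List.suffix_refl _
  set Lb : ℕ → List A := fun k => (lf k).drop ((lf k).length - k) with hLbdef
  have hLbsfx : ∀ k, Lb k <:+ lf k := fun k => List.drop_suffix _ _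
  have hLblen : ∀ k, (Lb k).length = k := by
    intro k
    rw [hLbdef]
    simp only [List.length_drop]
    have := hlege k
    omega
  have hstepL : ∀ k, ∃ b, Lb (k + 1) = b :: Lb k := by
    intro k
    have h1 : Lb k <:+ lf (k + 1) := (hLbsfx k).trans (hsfx2 k (k + 1) (by omega))
    have h2 : Lb (k + 1) <:+ lf (k + 1) := hLbsfx (k + 1)
    have h3 : Lb k <:+ Lb (k + 1) :=
      suffix_of_suffix_length_le h1 h2 (by rw [hLblen, hLblen]; omega)
    exact eq_cons_of_suffix_succ h3 (by rw [hLblen, hLblen])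
  have hnd : ∀ k, ¬ Deci Φ (nodeL hc (Lb k)) := by
    intro k
    have h1 : Lb k <:+ lf (k + 1) := (hLbsfx k).trans (hsfx2 k (k + 1) (by omega))
    have h2 : Lb k ≠ lf (k + 1) := by
      intro he
      have h4 := hLblen k
      rw [he] at h4
      have h5 := hlege (k + 1)
      omega
    exact hlfv (k + 1) (Lb k) h1 h2
  exact branch_false hc Lb hstepL hnd

theorem path_exists (hc : HasMod Φ) (α : A → A) :
    ∃ v, IsLeaf (Ttr hc) v ∧ agrees α v ∧ Φ α = Φ (fval v) := by
  classical
  let walk : ℕ → List A := fun n => Nat.rec [] (fun _ l => α (qyL hc l) :: l) n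
  have hwalk : ∀ n, walk (n + 1) = α (qyL hc (walk n)) :: walk n := fun n => rfl
  have hagr : ∀ n, agrees α (nodeL hc (walk n)) := by
    intro n
    induction n with
    | zero =>
      intro a b hb
      exact absurd hb (Set.notMem_empty _)
    | succ n ih =>
      intro a b hb
      rw [hwalk n, node_cons_val] at hb
      rcases Set.mem_insert_iff.mp hb with he | hb'
      · obtain ⟨rfl, rfl⟩ := Prod.mk.injEq _ _ _ _ ▸ he
        rfl
      · exact ih hb'
  have hsfxw : ∀ {l' : List A} {n : ℕ}, l' <:+ walk n → l' ≠ walk n →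
      ∃ m, m < n ∧ l' = walk m := by
    intro l' n
    induction n with
    | zero =>
      intro hs hne
      exact absurd (List.suffix_nil.mp hs) hne
    | succ n ih =>
      intro hs hne
      rw [hwalk n] at hs
      rcases List.suffix_cons_iff.mp hs with he | hs'
      · exact absurd (he.trans (hwalk n).symm) hne
      · rcases Classical.em (l' = walk n) with he | he
        · exact ⟨n, by omega, he⟩
        · obtain ⟨m, hm, he'⟩ := ih hs' he
          exact ⟨m, by omega, he'⟩
  by_cases hdec : ∃ n, Deci Φ (nodeL hc (walk n))
  · obtain ⟨n, hnD, hnmin⟩ : ∃ n, Deci Φ (nodeL hc (walk n)) ∧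
        ∀ m, m < n → ¬ Deci Φ (nodeL hc (walk m)) :=
      ⟨Nat.find hdec, Nat.find_spec hdec, fun m hm => Nat.find_min hdec hm⟩
    have hv : ValidL hc (walk n) := by
      intro l' hs hne
      obtain ⟨m, hm, rfl⟩ := hsfxw hs hne
      exact hnmin m hm
    refine ⟨nodeL hc (walk n), (leaf_iff hc hv).mpr hnD, hagr n, ?_⟩
    obtain ⟨c, hcf⟩ := hnD
    rw [hcf α (hagr n), hcf (fval _) (agrees_fval _)]
  · push_neg at hdec
    exfalso
    have hvw : ∀ n, ValidL hc (walk n) := by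
      intro n l' hs hne
      obtain ⟨m, hm, rfl⟩ := hsfxw hs hne
      exact hdec m
    refine T_wellFounded hc ⟨fun n => nodeL hc (walk n), fun n => node_mem_T hc (hvw n), ?_⟩
    refine strictMono_nat_of_lt_succ ?_
    intro n
    refine (node_lt_iff hc).mpr ⟨?_, ?_⟩
    · rw [hwalk n]; exact List.suffix_cons _ _
    · rw [hwalk n]
      exact fun h => List.cons_ne_self _ _ h.symm

end S0P

/-- Every total continuous function `Φ : A^A → A` (`A` infinite
discrete, `A^A` with the product topology) is sequential: there are a
well-founded total sequential tree `T` and a function `F` on its leaves with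
`Φ = Φ_{T,F}`. -/
theorem statement0 {A : Type u} [Infinite A] (Φ : (A → A) → A)
    (hΦ : letI : TopologicalSpace A := ⊥; Continuous Φ) :
    ∃ (T : Set (FPF A)) (F : FPF A → A),
      IsTotalSeqTree T ∧ WellFoundedTree T ∧
      ∀ α : A → A, ∃ v, IsLeaf T v ∧ agrees α v ∧ Φ α = F v := by
  classical
  have hc : S0P.HasMod Φ := S0P.hasMod_of_continuous Φ hΦ
  refine ⟨S0P.Ttr hc, fun p => Φ (S0P.fval p), S0P.T_isTotal hc, S0P.T_wellFounded hc, ?_⟩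
  intro α
  obtain ⟨v, h1, h2, h3⟩ := S0P.path_exists hc α
  exact ⟨v, h1, h2, h3⟩

end OostenK2
end
end

section
/- If A is an uncountable set, then there exists a partial continuous function A^A ⇀ A with open domain that is not partial sequential. -/
open Classical

noncomputable section

namespace OostenK2

universe u

variable {A : Type u}

/-! ### Auxiliary material for Statement 1 -/

section Statement1Aux

lemma FPF.mem_dom {p : FPF A} {a : A} : a ∈ p.dom ↔ ∃ b, (a, b) ∈ p.val := by
  constructor
  · rintro ⟨⟨x, y⟩, hxy, rfl⟩; exact ⟨y, hxy⟩
  · rintro ⟨b, hb⟩; exact ⟨(a, b), hb, rfl⟩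

/-- Extend a finite partial function by one pair. -/
def FPF.ext (p : FPF A) (a b : A) (ha : a ∉ p.dom) : FPF A :=
  ⟨insert (a, b) p.val, by
    constructor
    · intro x y y' h1 h2
      rcases Set.mem_insert_iff.1 h1 with g1 | g1 <;>
        rcases Set.mem_insert_iff.1 h2 with g2 | g2
      · injection g1 with hx hy; injection g2 with hx' hy'; rw [hy, hy']
      · injection g1 with hx hy; subst hx; exact absurd (FPF.mem_dom.2 ⟨y', g2⟩) ha
      · injection g2 with hx hy; subst hx; exact absurd (FPF.mem_dom.2 ⟨y, g1⟩) ha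
      · exact p.prop.1 g1 g2
    · exact p.prop.2.insert _⟩

lemma FPF.dom_ext (p : FPF A) (a b : A) (ha : a ∉ p.dom) :
    (p.ext a b ha).dom = insert a p.dom := by
  show Prod.fst '' insert (a, b) p.val = insert a (Prod.fst '' p.val)
  rw [Set.image_insert_eq]

theorem not_seqRel [Uncountable A] (a₀ b₁ : A) (hb : b₁ ≠ a₀) :
    ¬ SeqRel (fun (β : A → A) b =>
        (if ∃ a, β a = a₀ then (some a₀ : Option A) else none) = some b) := by
  classical
  rintro ⟨T, F, ⟨htree, hsucc⟩, hspec⟩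
  -- Step 1: no leaf avoids the value a₀
  have noleaf : ∀ v, IsLeaf T v → ∃ x y, (x, y) ∈ v.val ∧ y = a₀ := by
    intro v hv
    by_contra hcon
    push_neg at hcon
    set α : A → A := fun x => if h : ∃ y, (x, y) ∈ v.val then h.choose else b₁ with hα
    have hag : agrees α v := by
      intro x y hxy
      have h : ∃ y, (x, y) ∈ v.val := ⟨y, hxy⟩
      simp only [hα, dif_pos h]
      exact v.prop.1 h.choose_spec hxy
    have hnone : ¬∃ a, α a = a₀ := by
      rintro ⟨a, ha⟩
      by_cases h : ∃ y, (a, y) ∈ v.val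
      · rw [hα] at ha; simp only [dif_pos h] at ha
        exact hcon a h.choose h.choose_spec ha
      · rw [hα] at ha; simp only [dif_neg h] at ha; exact hb ha
    have h2 : (if ∃ a, α a = a₀ then (some a₀ : Option A) else none) = some (F v) :=
      (hspec α (F v)).2 ⟨v, hv, hag, rfl⟩
    rw [if_neg hnone] at h2
    exact Option.some_ne_none _ h2.symm
  -- Step 2: every a₀-avoiding node in T has a canonical child answering b₁
  have key : ∀ p : FPF A, p ∈ T → (∀ x y, (x, y) ∈ p.val → y ≠ a₀) →
      ∃ a : A, ∃ q : FPF A, (q ∈ T ∧ ∀ x y, (x, y) ∈ q.val → y ≠ a₀) ∧ a ∉ p.dom ∧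
        q.val = insert (a, b₁) p.val ∧
        ∀ q', ImmSucc T p q' → p < q' ∧ FPF.dom q' = insert a p.dom := by
    intro p hpT hpv
    have hnl : ¬ IsLeaf T p := by
      intro hl
      obtain ⟨x, y, hxy, rfl⟩ := noleaf p hl
      exact hpv x _ hxy rfl
    obtain ⟨a, ha, hiff⟩ := hsucc p hpT hnl
    set q := p.ext a b₁ ha with hqdef
    have hle : p ≤ q := fun z hz => Set.mem_insert_of_mem _ hz
    have hlt : p < q := by
      refine lt_of_le_of_ne hle ?_
      intro he
      exact ha (FPF.mem_dom.2 ⟨b₁, by rw [he]; exact Set.mem_insert _ _⟩)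
    have hdom : q.dom = insert a p.dom := FPF.dom_ext p a b₁ ha
    have hq : ImmSucc T p q := (hiff q).2 ⟨hlt, hdom⟩
    refine ⟨a, q, ⟨hq.1, ?_⟩, ha, rfl, fun q' hq' => (hiff q').1 hq'⟩
    intro x y hxy
    rcases Set.mem_insert_iff.1 hxy with h | h
    · injection h with hx hy; rw [hy]; exact hb
    · exact hpv x y h
  choose qa qn hGood hnotmem hval himm using key
  -- the branch through T answering b₁ everywhere
  have h0T : (FPF.empty A) ∈ T := htree.1
  have h0v : ∀ x y, (x, y) ∈ (FPF.empty A).val → y ≠ a₀ := by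
    intro x y hxy; exact absurd hxy (Set.notMem_empty _)
  let f : ℕ → {p : FPF A // p ∈ T ∧ ∀ x y, (x, y) ∈ p.val → y ≠ a₀} := fun n =>
    Nat.rec ⟨FPF.empty A, h0T, h0v⟩
      (fun _ ih => ⟨qn ih.1 ih.2.1 ih.2.2, hGood ih.1 ih.2.1 ih.2.2⟩) n
  let an : ℕ → A := fun n => qa (f n).1 (f n).2.1 (f n).2.2
  have hfval : ∀ n, (f (n + 1)).1.val = insert (an n, b₁) (f n).1.val := fun n =>
    hval (f n).1 (f n).2.1 (f n).2.2
  have hanot : ∀ n, an n ∉ (f n).1.dom := fun n => hnotmem (f n).1 (f n).2.1 (f n).2.2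
  have himm' : ∀ n q', ImmSucc T (f n).1 q' →
      (f n).1 < q' ∧ FPF.dom q' = insert (an n) (f n).1.dom := fun n =>
    himm (f n).1 (f n).2.1 (f n).2.2
  have hmono : ∀ m n, m ≤ n → (f m).1.val ⊆ (f n).1.val := by
    intro m n h
    induction n with
    | zero => rw [Nat.le_zero.1 h]
    | succ k ih =>
      rcases Nat.lt_or_ge m (k + 1) with h' | h'
      · exact (ih (Nat.lt_succ_iff.1 h')).trans
          (by rw [hfval k]; exact Set.subset_insert _ _)
      · rw [Nat.le_antisymm h h']
  have hvb : ∀ n x y, (x, y) ∈ (f n).1.val → y = b₁ := by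
    intro n
    induction n with
    | zero => intro x y h; exact absurd h (Set.notMem_empty _)
    | succ k ih =>
      intro x y h
      rw [hfval k] at h
      rcases Set.mem_insert_iff.1 h with h | h
      · exact congrArg Prod.snd h
      · exact ih x y h
  -- a point not interrogated along the branch
  have hcnt : (⋃ n, (f n).1.dom).Countable :=
    Set.countable_iUnion fun n => ((f n).1.2.2.image Prod.fst).countable
  obtain ⟨x₀, hx₀⟩ : ∃ x, x ∉ ⋃ n, (f n).1.dom := by
    by_contra hc
    push_neg at hc
    exact Set.not_countable_univ (by rwa [Set.eq_univ_of_forall hc] at hcnt)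
  set α : A → A := fun x => if x = x₀ then a₀ else b₁ with hαdef
  have hαmem : ∀ n x, x ∈ (f n).1.dom → α x = b₁ := by
    intro n x hx
    have hne : x ≠ x₀ := fun h => hx₀ (h ▸ Set.mem_iUnion.2 ⟨n, hx⟩)
    simp [hαdef, hne]
  have hΦ : (if ∃ a, α a = a₀ then (some a₀ : Option A) else none) = some a₀ := by
    rw [if_pos ⟨x₀, by simp [hαdef]⟩]
  obtain ⟨v, hvleaf, hvagr, -⟩ := (hspec α a₀).1 hΦ
  have hvfin : v.val.Finite := v.2.2
  -- the whole branch lies below the leaf v : contradiction with finiteness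
  have hle : ∀ n, (f n).1.val ⊆ v.val := by
    intro n
    induction n with
    | zero => intro z hz; exact absurd hz (Set.notMem_empty _)
    | succ k ih =>
      have hne : (f k).1 ≠ v := by
        intro he
        refine hvleaf.2 ⟨(f (k + 1)).1, (f (k + 1)).2.1, ?_⟩
        rw [← he]
        refine lt_of_le_of_ne (hmono k (k + 1) (Nat.le_succ k)) ?_
        intro h
        exact hanot k (FPF.mem_dom.2 ⟨b₁, by rw [h, hfval k]; exact Set.mem_insert _ _⟩)
      have hlt : (f k).1 < v := lt_of_le_of_ne ih hne
      set Sset : Set (FPF A) := {t | t ∈ T ∧ (f k).1 < t ∧ t ≤ v} with hSdef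
      have hSfin : Sset.Finite := by
        have h1 : (Subtype.val '' Sset).Finite :=
          hvfin.finite_subsets.subset (by rintro s ⟨t, ht, rfl⟩; exact ht.2.2)
        exact h1.of_finite_image (Subtype.val_injective.injOn)
      obtain ⟨q, hqS, hqmin⟩ :=
        Set.Finite.exists_minimalFor id Sset hSfin ⟨v, hvleaf.1, hlt, le_refl v⟩
      have hqimm : ImmSucc T (f k).1 q := by
        refine ⟨hqS.1, hqS.2.1, ?_⟩
        rintro ⟨t, htT, hlt1, hlt2⟩
        have htS : t ∈ Sset := ⟨htT, hlt1, le_of_lt (lt_of_lt_of_le hlt2 hqS.2.2)⟩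
        exact absurd (hqmin htS (le_of_lt hlt2)) hlt2.not_ge
      obtain ⟨-, hqdom⟩ := himm' k q hqimm
      have hqv : q.val ⊆ v.val := hqS.2.2
      have hagq : agrees α q := fun x y hxy => hvagr (hqv hxy)
      have haq : an k ∈ FPF.dom q := by rw [hqdom]; exact Set.mem_insert _ _
      obtain ⟨c, hc⟩ := FPF.mem_dom.1 haq
      have h1 : α (an k) = c := hagq hc
      have h2 : α (an k) = b₁ := hαmem (k + 1) (an k)
        (FPF.mem_dom.2 ⟨b₁, by rw [hfval k]; exact Set.mem_insert _ _⟩)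
      have hcb : c = b₁ := by rw [← h1, h2]
      have hfq : (f k).1.val ⊆ q.val := le_of_lt hqS.2.1
      rw [hfval k]
      intro z hz
      rcases Set.mem_insert_iff.1 hz with h | h
      · rw [h]; exact hqv (hcb ▸ hc)
      · exact hqv (hfq h)
  -- injectivity of n ↦ (aₙ, b₁) contradicts finiteness of v
  have hginj : Function.Injective (fun n => (an n, b₁)) := by
    intro m n hmn
    have hmn' : (an m, b₁) = (an n, b₁) := hmn
    by_contra hne
    rcases lt_trichotomy m n with h | h | h
    · have h1 : (an m, b₁) ∈ (f n).1.val :=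
        hmono (m + 1) n h (by rw [hfval m]; exact Set.mem_insert _ _)
      rw [hmn'] at h1
      exact hanot n (FPF.mem_dom.2 ⟨b₁, h1⟩)
    · exact hne h
    · have h1 : (an n, b₁) ∈ (f m).1.val :=
        hmono (n + 1) m h (by rw [hfval n]; exact Set.mem_insert _ _)
      rw [← hmn'] at h1
      exact hanot m (FPF.mem_dom.2 ⟨b₁, h1⟩)
  refine Set.infinite_range_of_injective hginj (hvfin.subset ?_)
  rintro z ⟨n, rfl⟩
  exact hle (n + 1) (by rw [hfval n]; exact Set.mem_insert _ _)

end Statement1Aux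

/-- If `A` is uncountable, there is a partial continuous
function `A^A ⇀ A` with open domain which is not partial sequential. -/
theorem statement1 {A : Type u} [Uncountable A] :
    ∃ Φ : (A → A) → Option A,
      (letI : TopologicalSpace A := ⊥; IsOpen {α : A → A | (Φ α).isSome}) ∧
      (letI : TopologicalSpace A := ⊥; letI : TopologicalSpace (Option A) := ⊥;
        ContinuousOn Φ {α : A → A | (Φ α).isSome}) ∧
      ¬ SeqRel (fun β b => Φ β = some b) := by
  classical
  obtain ⟨a₀⟩ : Nonempty A := inferInstance
  obtain ⟨b₁, hb⟩ := exists_ne a₀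
  refine ⟨fun α => if ∃ a, α a = a₀ then some a₀ else none, ?_, ?_, not_seqRel a₀ b₁ hb⟩
  · letI : TopologicalSpace A := ⊥
    haveI : DiscreteTopology A := ⟨rfl⟩
    have hset : {α : A → A |
        (if ∃ a, α a = a₀ then (some a₀ : Option A) else none).isSome} =
        ⋃ a : A, (fun α : A → A => α a) ⁻¹' {a₀} := by
      ext α
      by_cases h : ∃ a, α a = a₀ <;> simp [h]
    rw [hset]
    exact isOpen_iUnion fun a =>
      IsOpen.preimage (continuous_apply a) (isOpen_discrete {a₀})
  · letI : TopologicalSpace A := ⊥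
    letI : TopologicalSpace (Option A) := ⊥
    refine ContinuousOn.congr (continuousOn_const (c := (some a₀ : Option A))) ?_
    intro α hα
    simp only [Set.mem_setOf_eq] at hα
    by_cases h : ∃ a, α a = a₀
    · simp [h]
    · simp [h] at hα

end OostenK2
end
end

section
/- Let Φ : A^A → A be a continuous function (A discrete, A^A with product topology) with base 𝓑 (a set of finite partial functions p such that Φ is constant on each basic open U_p = {α : p ⊆ α}, and every α extends some p ∈ 𝓑). Then for any finite partial function s, either Φ is constant on U_s, or there exists a finite subset C of A − dom(s) such that every p ∈ 𝓑 compatible with s has dom(p) ∩ C ≠ ∅. -/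
open Classical

noncomputable section

namespace OostenK2

universe u

variable {A : Type u}

/-- `𝓑` is a base for the continuous `Φ`: `Φ` is constant on each `U_p`,
`p ∈ 𝓑`, and every `α` extends some `p ∈ 𝓑`. -/
def IsBase {A : Type u} (Φ : (A → A) → A) (𝓑 : Set (FPF A)) : Prop :=
  (∀ p ∈ 𝓑, ∀ α β : A → A, agrees α p → agrees β p → Φ α = Φ β) ∧
  (∀ α : A → A, ∃ p ∈ 𝓑, agrees α p)

/-- For a continuous `Φ : A^A → A` with base `𝓑` and any
finite partial function `s`: either `Φ` is constant on `U_s`, or some finite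
`C ⊆ A − dom s` meets the domain of every `p ∈ 𝓑` compatible with `s`. -/
theorem statement2 {A : Type u} (Φ : (A → A) → A)
    (hΦ : letI : TopologicalSpace A := ⊥; Continuous Φ)
    (𝓑 : Set (FPF A)) (h𝓑 : IsBase Φ 𝓑) (s : FPF A) :
    (∀ α β : A → A, agrees α s → agrees β s → Φ α = Φ β) ∨
    ∃ C : Finset A, (∀ c ∈ C, c ∉ FPF.dom s) ∧
      ∀ p ∈ 𝓑, compatFPF p s → ∃ c ∈ C, c ∈ FPF.dom p := by
  by_cases H : ∀ C : Finset A, (∀ c ∈ C, c ∉ FPF.dom s) →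
      ∃ p ∈ 𝓑, compatFPF p s ∧ ∀ c ∈ C, c ∉ FPF.dom p
  · left
    intro α β hα hβ
    obtain ⟨p, hp, hpα⟩ := h𝓑.2 α
    obtain ⟨q, hq, hqβ⟩ := h𝓑.2 β
    have hfin : ((FPF.dom p ∪ FPF.dom q) \ FPF.dom s).Finite :=
      ((p.prop.2.image _).union (q.prop.2.image _)).diff
    obtain ⟨r, hr, hrs, hrC⟩ := H hfin.toFinset (by
      intro c hc
      rw [Set.Finite.mem_toFinset] at hc
      exact hc.2)
    -- build γ from α: follow r on dom r, else α
    set build : (A → A) → A → A := fun α a =>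
      if h : ∃ x ∈ r.val, x.1 = a then h.choose.2 else α a with hbuild
    have hmemr : ∀ a (h : ∃ x ∈ r.val, x.1 = a), (a, h.choose.2) ∈ r.val := by
      intro a h
      have := h.choose_spec
      have : (h.choose.1, h.choose.2) ∈ r.val := by
        rw [Prod.mk.eta]; exact this.1
      rwa [h.choose_spec.2] at this
    have hbr : ∀ α : A → A, agrees (build α) r := by
      intro α a b hab
      have h : ∃ x ∈ r.val, x.1 = a := ⟨(a, b), hab, rfl⟩
      simp only [hbuild, dif_pos h]
      exact r.prop.1 (hmemr a h) hab
    have key : ∀ (α' : A → A) (p' : FPF A), p' ∈ 𝓑 → agrees α' p' → agrees α' s →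
        FPF.dom p' ⊆ FPF.dom p ∪ FPF.dom q → Φ α' = Φ (build α') := by
      intro α' p' hpB hpα' hαs hsub
      refine h𝓑.1 p' hpB α' (build α') hpα' ?_
      intro a b hab
      by_cases h : ∃ x ∈ r.val, x.1 = a
      · simp only [hbuild, dif_pos h]
        -- a ∈ dom r, so a ∉ C, hence a ∈ dom s (since a ∈ dom p ∪ dom q)
        have hadomr : a ∈ FPF.dom r := ⟨h.choose, h.choose_spec.1, h.choose_spec.2⟩
        have hanotC : a ∉ hfin.toFinset := fun hc => hrC a hc hadomr
        rw [Set.Finite.mem_toFinset] at hanotC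
        have hadoms : a ∈ FPF.dom s := by
          by_contra hns
          exact hanotC ⟨hsub ⟨(a, b), hab, rfl⟩, hns⟩
        obtain ⟨b', hb'⟩ : ∃ b', (a, b') ∈ s.val := by
          obtain ⟨x, hx, hxa⟩ := hadoms
          exact ⟨x.2, by rw [← hxa, Prod.mk.eta]; exact hx⟩
        have h1 : h.choose.2 = b' := hrs (hmemr _ h) hb'
        have h2 : α' a = b' := hαs hb'
        have h3 : α' a = b := hpα' hab
        rw [h1, ← h2, h3]
      · simp only [hbuild, dif_neg h]
        exact hpα' hab
    have hps : agrees α s := hα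
    calc Φ α = Φ (build α) := key α p hp hpα hα Set.subset_union_left
      _ = Φ (build β) := h𝓑.1 r hr _ _ (hbr α) (hbr β)
      _ = Φ β := (key β q hq hqβ hβ Set.subset_union_right).symm
  · right
    push_neg at H
    obtain ⟨C, hC1, hC2⟩ := H
    refine ⟨C, hC1, fun p hp hcompat => ?_⟩
    obtain ⟨c, hc, hcd⟩ := hC2 p hp hcompat
    exact ⟨c, hc, hcd⟩

end OostenK2
end
end

section
/- A partial function A^A ⇀ A is of the form φ_α (defined by interrogations) for some α ∈ A^A if and only if it is partial sequential. -/
open Classical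

noncomputable section

namespace OostenK2

universe u

variable {A : Type u}

/-! ### Auxiliary development for statement3 -/

namespace St3

variable {A : Type u}

lemma fpf_le_iff {p t : FPF A} : p ≤ t ↔ p.val ⊆ t.val := Iff.rfl

lemma fpf_ext {p t : FPF A} (h : p.val = t.val) : p = t := Subtype.ext h

lemma fpf_fn (p : FPF A) : ∀ ⦃a b b'⦄, (a, b) ∈ p.val → (a, b') ∈ p.val → b = b' :=
  p.prop.1

lemma mem_dom_iff {p : FPF A} {b : A} : b ∈ FPF.dom p ↔ ∃ x, (b, x) ∈ p.val := by
  constructor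
  · rintro ⟨⟨a, x⟩, hm, rfl⟩; exact ⟨x, hm⟩
  · rintro ⟨x, hx⟩; exact ⟨(b, x), hx, rfl⟩

lemma dom_finite (p : FPF A) : (FPF.dom p).Finite := p.prop.2.image _

lemma dom_mono {p t : FPF A} (h : p ≤ t) : FPF.dom p ⊆ FPF.dom t := by
  intro b hb
  rcases mem_dom_iff.1 hb with ⟨x, hx⟩
  exact mem_dom_iff.2 ⟨x, h hx⟩

/-- Lookup in a finite partial function. -/
def pval (p : FPF A) (b : A) : Option A :=
  if h : ∃ x, (b, x) ∈ p.val then some h.choose else none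

lemma pval_eq_some_iff {p : FPF A} {b x : A} : pval p b = some x ↔ (b, x) ∈ p.val := by
  unfold pval
  constructor
  · intro h
    split at h
    · rename_i hex
      cases h
      exact hex.choose_spec
    · cases h
  · intro hm
    have hex : ∃ x, (b, x) ∈ p.val := ⟨x, hm⟩
    rw [dif_pos hex]
    exact congrArg some (fpf_fn p hex.choose_spec hm)

lemma pval_eq_none_iff {p : FPF A} {b : A} : pval p b = none ↔ b ∉ FPF.dom p := by
  unfold pval
  rw [mem_dom_iff]
  split
  · rename_i hex; simp [hex]
  · rename_i hex; simp [hex]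

lemma pval_mono {p t : FPF A} (h : p ≤ t) {b x : A} (hx : pval p b = some x) :
    pval t b = some x :=
  pval_eq_some_iff.2 (h (pval_eq_some_iff.1 hx))

lemma fpf_le_of_dom_subset {p t u : FPF A} (hp : p ≤ u) (ht : t ≤ u)
    (hd : FPF.dom p ⊆ FPF.dom t) : p ≤ t := by
  intro z hz
  obtain ⟨b, x⟩ := z
  have hb : b ∈ FPF.dom t := hd (mem_dom_iff.2 ⟨x, hz⟩)
  rcases mem_dom_iff.1 hb with ⟨y, hy⟩
  have : x = y := fpf_fn u (hp hz) (ht hy)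
  rwa [this]

lemma fpf_eq_of_dom_eq {p t u : FPF A} (hp : p ≤ u) (ht : t ≤ u)
    (hd : FPF.dom p = FPF.dom t) : p = t :=
  le_antisymm (fpf_le_of_dom_subset hp ht hd.le) (fpf_le_of_dom_subset ht hp hd.ge)

/-- A fresh element outside the domain. -/
def freshA [Infinite A] (p : FPF A) : A :=
  ((dom_finite p).infinite_compl).nonempty.choose

lemma freshA_not_mem [Infinite A] (p : FPF A) : freshA p ∉ FPF.dom p :=
  ((dom_finite p).infinite_compl).nonempty.choose_spec

/-- Extend a finite partial function by one pair (if the argument is new). -/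
def extF (p : FPF A) (a x : A) : FPF A :=
  if h : a ∈ FPF.dom p then p
  else ⟨insert (a, x) p.val, by
    rintro a' b b' hb hb'
    rcases hb with hb | hb <;> rcases hb' with hb' | hb'
    · rw [Prod.mk.injEq] at hb hb'
      exact hb.2.trans hb'.2.symm
    · rw [Prod.mk.injEq] at hb
      exact absurd (mem_dom_iff.2 ⟨b', hb.1 ▸ hb'⟩) h
    · rw [Prod.mk.injEq] at hb'
      exact absurd (mem_dom_iff.2 ⟨b, hb'.1 ▸ hb⟩) h
    · exact fpf_fn p hb hb', (p.prop.2.insert _)⟩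

lemma extF_val {p : FPF A} {a : A} (ha : a ∉ FPF.dom p) (x : A) :
    (extF p a x).val = insert (a, x) p.val := by
  unfold extF; rw [dif_neg ha]

lemma le_extF {p : FPF A} (ha : a ∉ FPF.dom p) (x : A) : p ≤ extF p a x := by
  rw [fpf_le_iff, extF_val ha]; exact Set.subset_insert _ _

lemma mem_extF {p : FPF A} (ha : a ∉ FPF.dom p) (x : A) : (a, x) ∈ (extF p a x).val := by
  rw [extF_val ha]; exact Set.mem_insert _ _

lemma lt_extF {p : FPF A} (ha : a ∉ FPF.dom p) (x : A) : p < extF p a x := by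
  refine lt_of_le_of_ne (le_extF ha x) fun h => ?_
  exact ha (mem_dom_iff.2 ⟨x, h ▸ mem_extF ha x⟩)

lemma dom_extF {p : FPF A} (ha : a ∉ FPF.dom p) (x : A) :
    FPF.dom (extF p a x) = insert a (FPF.dom p) := by
  ext b
  simp only [mem_dom_iff, extF_val ha, Set.mem_insert_iff, Prod.ext_iff]
  constructor
  · rintro ⟨y, ⟨h1, h2⟩ | hy⟩
    · exact Or.inl h1
    · exact Or.inr ⟨y, hy⟩
  · rintro (rfl | hb)
    · exact ⟨x, Or.inl ⟨rfl, rfl⟩⟩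
    · rcases hb with ⟨y, hy⟩
      exact ⟨y, Or.inr hy⟩

/-- Characterization of an extension with the given domain. -/
lemma eq_extF_of_dom {p t : FPF A} {a : A} (ha : a ∉ FPF.dom p) (hpt : p ≤ t)
    (hd : FPF.dom t = insert a (FPF.dom p)) {x : A} (hx : (a, x) ∈ t.val) :
    t = extF p a x := by
  refine fpf_ext ?_
  rw [extF_val ha]
  apply Set.Subset.antisymm
  · rintro ⟨b, y⟩ hy
    have hb : b ∈ insert a (FPF.dom p) := hd ▸ mem_dom_iff.2 ⟨y, hy⟩
    rcases hb with rfl | hb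
    · exact Or.inl (Prod.ext rfl (fpf_fn t hy hx))
    · rcases mem_dom_iff.1 hb with ⟨z, hz⟩
      have : y = z := fpf_fn t hy (hpt hz)
      exact Or.inr (this ▸ hz)
  · rintro ⟨b, y⟩ hy
    rcases hy with hy | hy
    · cases hy; exact hx
    · exact hpt hy

/-- Push a dummy pair with a fresh argument. -/
def pushF [Infinite A] (p : FPF A) (x : A) : FPF A := extF p (freshA p) x

lemma lt_pushF [Infinite A] (p : FPF A) (x : A) : p < pushF p x :=
  lt_extF (freshA_not_mem p) x

lemma dom_pushF [Infinite A] (p : FPF A) (x : A) :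
    FPF.dom (pushF p x) = insert (freshA p) (FPF.dom p) :=
  dom_extF (freshA_not_mem p) x

lemma mem_pushF [Infinite A] (p : FPF A) (x : A) : (freshA p, x) ∈ (pushF p x).val :=
  mem_extF (freshA_not_mem p) x

/-- Iterated dummy extension. -/
def extL [Infinite A] : FPF A → List A → FPF A
  | p, [] => p
  | p, x :: xs => extL (pushF p x) xs

@[simp] lemma extL_nil [Infinite A] (p : FPF A) : extL p [] = p := rfl

@[simp] lemma extL_cons [Infinite A] (p : FPF A) (x : A) (xs : List A) :
    extL p (x :: xs) = extL (pushF p x) xs := rfl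

lemma extL_append [Infinite A] (p : FPF A) (xs ys : List A) :
    extL p (xs ++ ys) = extL (extL p xs) ys := by
  induction xs generalizing p with
  | nil => rfl
  | cons x xs ih => simp [ih]

lemma le_extL [Infinite A] (p : FPF A) (xs : List A) : p ≤ extL p xs := by
  induction xs generalizing p with
  | nil => exact le_rfl
  | cons x xs ih => exact le_trans (lt_pushF p x).le (ih (pushF p x))

lemma empty_le (p : FPF A) : FPF.empty A ≤ p := by
  intro z hz
  exact absurd hz (Set.notMem_empty _)

end St3
namespace St3

/-- Outcome of one machine step. -/
inductive MOut (A : Type u) where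
  | cont : List A → MOut A
  | ask : A → MOut A
  | res : A → MOut A
  | junk : MOut A

variable {A : Type u}

section Machine

variable (code : List A → A) (q r : A) (α : A → A)

/-- The next action of `α` after the answer list `L`. -/
def qnext (L : List A) : Option (A ⊕ A) :=
  if h : ∃ b, α (code L) = code [q, b] then some (Sum.inl h.choose)
  else if h : ∃ c, α (code L) = code [r, c] then some (Sum.inr h.choose) else none

/-- One step of the dialogue of `α` with the oracle `p`. -/
def mstep (p : FPF A) (L : List A) : MOut A :=
  match qnext code q r α L with
  | some (Sum.inl b) =>
      match pval p b with
      | some x => .cont (L ++ [x])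
      | none => .ask b
  | some (Sum.inr c) => .res c
  | none => .junk

/-- The run of the dialogue of `α` with oracle `p`. -/
def runM (p : FPF A) : ℕ → Option (List A)
  | 0 => some []
  | n + 1 => (runM p n).bind fun L =>
      match mstep code q r α p L with
      | .cont L' => some L'
      | _ => none

/-- `b` is queried along the run of `p`. -/
def Queried (p : FPF A) (b : A) : Prop :=
  ∃ n L, runM code q r α p n = some L ∧ qnext code q r α L = some (Sum.inl b)

/-- The run of `p` ends with result `c`. -/
def ResultM (p : FPF A) (c : A) : Prop :=
  ∃ n L, runM code q r α p n = some L ∧ mstep code q r α p L = .res c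

/-- The run of `p` ends asking the new question `b`. -/
def AsksM (p : FPF A) (b : A) : Prop :=
  ∃ n L, runM code q r α p n = some L ∧ mstep code q r α p L = .ask b

/-- The run of `p` diverges or dies on junk. -/
def DeadM (p : FPF A) : Prop :=
  (¬∃ b, AsksM code q r α p b) ∧ (¬∃ c, ResultM code q r α p c)

/-- Core nodes of the tree of `α`: every point of the domain is queried. -/
def T0 (p : FPF A) : Prop := ∀ b ∈ FPF.dom p, Queried code q r α p b

/-- The full tree of `α` : core nodes plus dummy chains over dead cores. -/
def TT [Infinite A] : Set (FPF A) :=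
  {p | ∃ q0 xs, T0 code q r α q0 ∧ (xs ≠ [] → DeadM code q r α q0) ∧ extL q0 xs = p}

end Machine

section MachineLemmas

variable {code : List A → A} {q r : A} {α : A → A}

lemma mstep_eq_cont {p : FPF A} {L : List A} {b x : A}
    (hq : qnext code q r α L = some (Sum.inl b)) (hp : pval p b = some x) :
    mstep code q r α p L = .cont (L ++ [x]) := by
  unfold mstep; rw [hq]; simp [hp]

lemma mstep_eq_ask {p : FPF A} {L : List A} {b : A}
    (hq : qnext code q r α L = some (Sum.inl b)) (hp : pval p b = none) :
    mstep code q r α p L = .ask b := by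
  unfold mstep; rw [hq]; simp [hp]

lemma mstep_eq_res {p : FPF A} {L : List A} {c : A}
    (hq : qnext code q r α L = some (Sum.inr c)) :
    mstep code q r α p L = .res c := by
  unfold mstep; rw [hq]

lemma mstep_eq_junk {p : FPF A} {L : List A}
    (hq : qnext code q r α L = none) :
    mstep code q r α p L = .junk := by
  unfold mstep; rw [hq]

lemma mstep_cont_inv {p : FPF A} {L M : List A}
    (h : mstep code q r α p L = .cont M) :
    ∃ b x, qnext code q r α L = some (Sum.inl b) ∧ pval p b = some x ∧ M = L ++ [x] := by
  unfold mstep at h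
  rcases hq : qnext code q r α L with _ | bc
  · rw [hq] at h; cases h
  · rcases bc with b | c
    · rw [hq] at h
      rcases hp : pval p b with _ | x <;> simp only [hp] at h <;> cases h
      exact ⟨b, x, rfl, hp, rfl⟩
    · rw [hq] at h; cases h

lemma mstep_ask_inv {p : FPF A} {L : List A} {b : A}
    (h : mstep code q r α p L = .ask b) :
    qnext code q r α L = some (Sum.inl b) ∧ pval p b = none := by
  unfold mstep at h
  rcases hq : qnext code q r α L with _ | bc
  · rw [hq] at h; cases h
  · rcases bc with b' | c
    · rw [hq] at h
      rcases hp : pval p b' with _ | x <;> simp only [hp] at h <;> cases h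
      exact ⟨rfl, hp⟩
    · rw [hq] at h; cases h

lemma mstep_res_inv {p : FPF A} {L : List A} {c : A}
    (h : mstep code q r α p L = .res c) :
    qnext code q r α L = some (Sum.inr c) := by
  unfold mstep at h
  rcases hq : qnext code q r α L with _ | bc
  · rw [hq] at h; cases h
  · rcases bc with b' | c'
    · rw [hq] at h
      rcases hp : pval p b' with _ | x <;> simp only [hp] at h <;> cases h
    · rw [hq] at h; cases h; rfl

lemma mstep_junk_inv {p : FPF A} {L : List A}
    (h : mstep code q r α p L = .junk) : qnext code q r α L = none := by
  unfold mstep at h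
  rcases hq : qnext code q r α L with _ | bc
  · rfl
  · rcases bc with b' | c'
    · rw [hq] at h
      rcases hp : pval p b' with _ | x <;> simp only [hp] at h <;> cases h
    · rw [hq] at h; cases h

lemma runM_succ {p : FPF A} {n : ℕ} :
    runM code q r α p (n + 1) = (runM code q r α p n).bind fun L =>
      match mstep code q r α p L with
      | .cont L' => some L'
      | _ => none := rfl

lemma runM_succ_of {p : FPF A} {n : ℕ} {L M : List A}
    (h : runM code q r α p n = some L) (hm : mstep code q r α p L = .cont M) :
    runM code q r α p (n + 1) = some M := by
  rw [runM_succ, h]; simp [hm]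

lemma runM_succ_some {p : FPF A} {n : ℕ} {M : List A}
    (h : runM code q r α p (n + 1) = some M) :
    ∃ L, runM code q r α p n = some L ∧ mstep code q r α p L = .cont M := by
  rw [runM_succ] at h
  rcases hr : runM code q r α p n with _ | L
  · rw [hr] at h; cases h
  · rw [hr] at h
    simp only [Option.bind_some] at h
    rcases hm : mstep code q r α p L with L' | b | c | _ <;> rw [hm] at h <;>
      first
      | (cases h; exact ⟨L, rfl, by rw [hm]⟩)
      | cases h

lemma runM_some_le {p : FPF A} {n m : ℕ} (hmn : m ≤ n) {M : List A}
    (h : runM code q r α p n = some M) : ∃ L, runM code q r α p m = some L := by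
  induction n generalizing M with
  | zero => cases Nat.le_zero.1 hmn; exact ⟨M, h⟩
  | succ k ih =>
    rcases Nat.lt_or_ge m (k+1) with hm | hm
    · rcases runM_succ_some h with ⟨L, hL, _⟩
      exact ih (Nat.lt_succ_iff.1 hm) hL
    · cases Nat.le_antisymm hmn hm; exact ⟨M, h⟩

lemma runM_length {p : FPF A} {n : ℕ} {L : List A}
    (h : runM code q r α p n = some L) : L.length = n := by
  induction n generalizing L with
  | zero => cases h; rfl
  | succ k ih =>
    rcases runM_succ_some h with ⟨L', hL', hm⟩
    rcases mstep_cont_inv hm with ⟨b, x, _, _, rfl⟩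
    simp [ih hL']

/-- Monotonicity of the run in the oracle. -/
lemma runM_mono {p t : FPF A} (hpt : p ≤ t) {n : ℕ} {L : List A}
    (h : runM code q r α p n = some L) : runM code q r α t n = some L := by
  induction n generalizing L with
  | zero => cases h; rfl
  | succ k ih =>
    rcases runM_succ_some h with ⟨L', hL', hm⟩
    rcases mstep_cont_inv hm with ⟨b, x, hq, hp, rfl⟩
    exact runM_succ_of (ih hL') (mstep_eq_cont hq (pval_mono hpt hp))

/-- The run dies right after a non-`cont` step. -/
lemma runM_none_after {p : FPF A} {n : ℕ} {L : List A}
    (h : runM code q r α p n = some L) (hm : ∀ M, mstep code q r α p L ≠ .cont M) :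
    runM code q r α p (n + 1) = none := by
  rcases hms : mstep code q r α p L with M | b | c | _
  · exact absurd hms (hm M)
  all_goals (rw [runM_succ, h]; simp [hms])

/-- Two non-`cont` steps happen at the same time (death point is unique). -/
lemma death_unique {p : FPF A} {n n' : ℕ} {L L' : List A}
    (h : runM code q r α p n = some L) (h' : runM code q r α p n' = some L')
    (hm : ∀ M, mstep code q r α p L ≠ .cont M)
    (hm' : ∀ M, mstep code q r α p L' ≠ .cont M) : n = n' ∧ L = L' := by
  rcases Nat.lt_trichotomy n n' with hlt | heq | hlt
  · exfalso
    rcases runM_some_le hlt h' with ⟨M, hM⟩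
    rw [runM_none_after h hm] at hM; cases hM
  · subst heq; rw [h] at h'; cases h'; exact ⟨rfl, rfl⟩
  · exfalso
    rcases runM_some_le hlt h with ⟨M, hM⟩
    rw [runM_none_after h' hm'] at hM; cases hM

lemma mstep_res_not_cont {p : FPF A} {L : List A} {c : A}
    (h : mstep code q r α p L = .res c) : ∀ M, mstep code q r α p L ≠ .cont M := by
  intro M hM; rw [h] at hM; cases hM

lemma mstep_ask_not_cont {p : FPF A} {L : List A} {b : A}
    (h : mstep code q r α p L = .ask b) : ∀ M, mstep code q r α p L ≠ .cont M := by
  intro M hM; rw [h] at hM; cases hM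

lemma mstep_junk_not_cont {p : FPF A} {L : List A}
    (h : mstep code q r α p L = .junk) : ∀ M, mstep code q r α p L ≠ .cont M := by
  intro M hM; rw [h] at hM; cases hM

end MachineLemmas

end St3
namespace St3

variable {A : Type u}

section StructLemmas

variable {code : List A → A} {q r : A} {α : A → A}

lemma pval_none_of_le {p t : FPF A} (hpt : p ≤ t) {b : A}
    (h : pval t b = none) : pval p b = none := by
  rcases hp : pval p b with _ | x
  · rfl
  · rw [pval_mono hpt hp] at h; cases h

/-- The run of any extension of a dead oracle is the same. -/
lemma dead_run_eq {q0 p : FPF A} (hd : DeadM code q r α q0) (hle : q0 ≤ p) :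
    ∀ n, runM code q r α p n = runM code q r α q0 n := by
  intro n
  induction n with
  | zero => rfl
  | succ k ih =>
    rcases hq0 : runM code q r α q0 k with _ | L
    · rw [hq0] at ih
      rw [runM_succ, runM_succ, ih, hq0]; rfl
    · rw [hq0] at ih
      rcases hms : mstep code q r α q0 L with M | b | c | _
      · rcases mstep_cont_inv hms with ⟨b, x, hq, hp, rfl⟩
        rw [runM_succ_of ih (mstep_eq_cont hq (pval_mono hle hp)),
          runM_succ_of hq0 hms]
      · exact absurd ⟨b, k, L, hq0, hms⟩ hd.1
      · exact absurd ⟨c, k, L, hq0, hms⟩ hd.2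
      · rw [runM_none_after ih (mstep_junk_not_cont (mstep_eq_junk (mstep_junk_inv hms))),
          runM_none_after hq0 (mstep_junk_not_cont hms)]

lemma dead_mono {q0 p : FPF A} (hd : DeadM code q r α q0) (hle : q0 ≤ p) :
    DeadM code q r α p := by
  constructor
  · rintro ⟨b, n, L, hr, hm⟩
    rw [dead_run_eq hd hle] at hr
    rcases mstep_ask_inv hm with ⟨hq, hp⟩
    exact hd.1 ⟨b, n, L, hr, mstep_eq_ask hq (pval_none_of_le hle hp)⟩
  · rintro ⟨c, n, L, hr, hm⟩
    rw [dead_run_eq hd hle] at hr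
    exact hd.2 ⟨c, n, L, hr, mstep_eq_res (mstep_res_inv hm)⟩

lemma dead_queried_mem {q0 : FPF A} (hd : DeadM code q r α q0) {b : A}
    (h : Queried code q r α q0 b) : b ∈ FPF.dom q0 := by
  rcases h with ⟨n, L, hr, hq⟩
  rcases hp : pval q0 b with _ | x
  · exact absurd ⟨b, n, L, hr, mstep_eq_ask hq hp⟩ hd.1
  · exact mem_dom_iff.2 ⟨x, pval_eq_some_iff.1 hp⟩

/-- Dead cores are maximal among cores. -/
lemma dead_max {q0 u : FPF A} (hd : DeadM code q r α q0) (hle : q0 ≤ u)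
    (hu : T0 code q r α u) : u = q0 := by
  refine le_antisymm (fpf_le_of_dom_subset le_rfl hle ?_) hle
  intro b hb
  rcases hu b hb with ⟨n, L, hr, hq⟩
  rw [dead_run_eq hd hle] at hr
  exact dead_queried_mem hd ⟨n, L, hr, hq⟩

/-- Result nodes are maximal among cores. -/
lemma result_max {p u : FPF A} {c : A} (hres : ResultM code q r α p c)
    (hle : p ≤ u) (hu : T0 code q r α u) : u = p := by
  rcases hres with ⟨n, L, hr, hm⟩
  have hun : runM code q r α u n = some L := runM_mono hle hr
  have hdie : runM code q r α u (n + 1) = none :=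
    runM_none_after hun (mstep_res_not_cont (mstep_eq_res (mstep_res_inv hm)))
  refine le_antisymm (fpf_le_of_dom_subset le_rfl hle ?_) hle
  intro b hb
  rcases hu b hb with ⟨m, M, hrm, hqm⟩
  have hmn : m ≤ n := by
    by_contra hgt
    rcases runM_some_le (Nat.succ_le_of_lt (Nat.lt_of_not_le hgt)) hrm with ⟨M', hM'⟩
    rw [hdie] at hM'; cases hM'
  rcases Nat.lt_or_ge m n with hlt | hge
  · rcases runM_some_le (Nat.succ_le_of_lt hlt) hr with ⟨M', hM'⟩
    rcases runM_succ_some hM' with ⟨L0, hL0, hcont⟩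
    have : M = L0 := by
      have := runM_mono hle hL0
      rw [hrm] at this; cases this; rfl
    subst this
    rcases mstep_cont_inv hcont with ⟨b0, x, hq0, hp0, rfl⟩
    rw [hqm] at hq0
    cases hq0
    exact mem_dom_iff.2 ⟨x, pval_eq_some_iff.1 hp0⟩
  · exfalso
    have : m = n := le_antisymm hmn hge
    subst this
    rw [hun] at hrm; cases hrm
    rw [mstep_res_inv hm] at hqm; cases hqm

/-- Nodes asking `b` are maximal among cores avoiding `b`. -/
lemma asks_max {p u : FPF A} {b : A} (hask : AsksM code q r α p b)
    (hle : p ≤ u) (hu : T0 code q r α u) (hb : b ∉ FPF.dom u) : u = p := by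
  rcases hask with ⟨n, L, hr, hm⟩
  rcases mstep_ask_inv hm with ⟨hq, _⟩
  have hun : runM code q r α u n = some L := runM_mono hle hr
  have hunone : pval u b = none := pval_eq_none_iff.2 hb
  have hdie : runM code q r α u (n + 1) = none :=
    runM_none_after hun (mstep_ask_not_cont (mstep_eq_ask hq hunone))
  refine le_antisymm (fpf_le_of_dom_subset le_rfl hle ?_) hle
  intro b' hb'
  rcases hu b' hb' with ⟨m, M, hrm, hqm⟩
  have hmn : m ≤ n := by
    by_contra hgt
    rcases runM_some_le (Nat.succ_le_of_lt (Nat.lt_of_not_le hgt)) hrm with ⟨M', hM'⟩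
    rw [hdie] at hM'; cases hM'
  rcases Nat.lt_or_ge m n with hlt | hge
  · rcases runM_some_le (Nat.succ_le_of_lt hlt) hr with ⟨M', hM'⟩
    rcases runM_succ_some hM' with ⟨L0, hL0, hcont⟩
    have : M = L0 := by
      have := runM_mono hle hL0
      rw [hrm] at this; cases this; rfl
    subst this
    rcases mstep_cont_inv hcont with ⟨b0, x, hq0, hp0, rfl⟩
    rw [hqm] at hq0
    cases hq0
    exact mem_dom_iff.2 ⟨x, pval_eq_some_iff.1 hp0⟩
  · exfalso
    have : m = n := le_antisymm hmn hge
    subst this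
    rw [hun] at hrm; cases hrm
    rw [hq] at hqm; cases hqm
    exact hb hb'

lemma runs_agree {s t P : FPF A} (hs : s ≤ P) (ht : t ≤ P) {n : ℕ} {L L' : List A}
    (h : runM code q r α s n = some L) (h' : runM code q r α t n = some L') : L = L' := by
  have h1 := runM_mono hs h
  have h2 := runM_mono ht h'
  rw [h1] at h2; cases h2; rfl

lemma T0_le_aux {s t P : FPF A} (hs0 : T0 code q r α s)
    (hs : s ≤ P) (ht : t ≤ P)
    (H : ∀ n M, runM code q r α s n = some M → ∃ M', runM code q r α t n = some M') :
    s ≤ t := by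
  rintro ⟨b, x⟩ hbx
  rcases hs0 b (mem_dom_iff.2 ⟨x, hbx⟩) with ⟨n, L, hr, hq⟩
  have hpv : pval s b = some x := pval_eq_some_iff.2 hbx
  have hnext : runM code q r α s (n + 1) = some (L ++ [x]) :=
    runM_succ_of hr (mstep_eq_cont hq hpv)
  rcases H (n + 1) _ hnext with ⟨M', hM'⟩
  rcases runM_succ_some hM' with ⟨L0, hL0, hcont⟩
  have hLL0 : L = L0 := runs_agree hs ht hr hL0
  subst hLL0
  have hMM : L ++ [x] = M' := runs_agree hs ht hnext hM'
  rcases mstep_cont_inv hcont with ⟨b0, x0, hq0, hp0, rfl⟩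
  rw [hq] at hq0; cases hq0
  have : x = x0 := by
    have := hMM
    simp only [List.append_cancel_left_eq, List.cons.injEq] at this
    exact this.1
  subst this
  exact pval_eq_some_iff.1 hp0

/-- Comparability of cores below a common node. -/
lemma T0_comparable {s t P : FPF A} (hs0 : T0 code q r α s) (ht0 : T0 code q r α t)
    (hs : s ≤ P) (ht : t ≤ P) : s ≤ t ∨ t ≤ s := by
  by_cases H : ∀ n M, runM code q r α s n = some M → ∃ M', runM code q r α t n = some M'
  · exact Or.inl (T0_le_aux hs0 hs ht H)
  · push_neg at H
    rcases H with ⟨n, M, hM, hnone⟩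
    refine Or.inr (T0_le_aux ht0 ht hs ?_)
    intro m M' hm'
    have hmn : m ≤ n := by
      by_contra hgt
      rcases runM_some_le (le_of_lt (Nat.lt_of_not_le hgt)) hm' with ⟨M'', hM''⟩
      exact hnone M'' hM''
    exact runM_some_le hmn hM

end StructLemmas

end St3
namespace St3

variable {A : Type u}

section TreeBasics

variable [Infinite A] {code : List A → A} {q r : A} {α : A → A}

lemma extL_prefix {Q : FPF A} {xs ys : List A}
    (h : extL Q xs ≤ extL Q ys) : ∃ zs, ys = xs ++ zs := by
  induction xs generalizing Q ys with
  | nil => exact ⟨ys, rfl⟩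
  | cons x xs ih =>
    rcases ys with _ | ⟨y, ys⟩
    · exfalso
      have hm : (freshA Q, x) ∈ (extL Q (x :: xs)).val :=
        le_extL (pushF Q x) xs (mem_pushF Q x)
      exact freshA_not_mem Q (mem_dom_iff.2 ⟨x, h hm⟩)
    · have hm : (freshA Q, x) ∈ (extL Q (x :: xs)).val :=
        le_extL (pushF Q x) xs (mem_pushF Q x)
      have hm' : (freshA Q, y) ∈ (extL Q (y :: ys)).val :=
        le_extL (pushF Q y) ys (mem_pushF Q y)
      have hxy : x = y := fpf_fn _ (h hm) hm'
      subst hxy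
      rcases ih (Q := pushF Q x) (ys := ys) h with ⟨zs, rfl⟩
      exact ⟨zs, rfl⟩

lemma extL_comparable {Q P : FPF A} {xs ys : List A}
    (hx : extL Q xs ≤ P) (hy : extL Q ys ≤ P) :
    extL Q xs ≤ extL Q ys ∨ extL Q ys ≤ extL Q xs := by
  induction xs generalizing Q ys with
  | nil => exact Or.inl (le_extL Q ys)
  | cons x xs ih =>
    rcases ys with _ | ⟨y, ys⟩
    · exact Or.inr (le_extL Q (x :: xs))
    · have hm : (freshA Q, x) ∈ P.val :=
        hx (le_extL (pushF Q x) xs (mem_pushF Q x))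
      have hm' : (freshA Q, y) ∈ P.val :=
        hy (le_extL (pushF Q y) ys (mem_pushF Q y))
      have hxy : x = y := fpf_fn _ hm hm'
      subst hxy
      exact ih hx hy

lemma dead_queried_iff {q0 p : FPF A} (hd : DeadM code q r α q0) (hle : q0 ≤ p) {b : A} :
    Queried code q r α p b ↔ Queried code q r α q0 b := by
  unfold Queried
  constructor
  · rintro ⟨n, L, hr, hq⟩
    rw [dead_run_eq hd hle] at hr
    exact ⟨n, L, hr, hq⟩
  · rintro ⟨n, L, hr, hq⟩
    rw [← dead_run_eq hd hle] at hr
    exact ⟨n, L, hr, hq⟩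

lemma extL_cons_not_le_core {q0 qb : FPF A} (hd : DeadM code q r α q0)
    (hb : T0 code q r α qb) (x : A) (xs : List A) :
    ¬ extL q0 (x :: xs) ≤ qb := by
  intro h
  have hm : (freshA q0, x) ∈ qb.val := h (le_extL (pushF q0 x) xs (mem_pushF q0 x))
  have hq0le : q0 ≤ qb := le_trans ((lt_pushF q0 x).le.trans (le_extL _ xs)) h
  have hQ : Queried code q r α qb (freshA q0) := hb _ (mem_dom_iff.2 ⟨x, hm⟩)
  rw [dead_queried_iff hd hq0le] at hQ
  exact freshA_not_mem q0 (dead_queried_mem hd hQ)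

lemma T0_mem_TT {p : FPF A} (h : T0 code q r α p) : p ∈ TT code q r α :=
  ⟨p, [], h, fun hne => absurd rfl hne, rfl⟩

lemma empty_mem_TT : FPF.empty A ∈ TT code q r α :=
  T0_mem_TT (fun b hb => by
    rcases mem_dom_iff.1 hb with ⟨x, hx⟩
    exact absurd hx (Set.notMem_empty _))

/-- Comparability of tree nodes below a common node. -/
lemma TT_comparable {s t P : FPF A} (hs : s ∈ TT code q r α) (ht : t ∈ TT code q r α)
    (hsP : s ≤ P) (htP : t ≤ P) : s ≤ t ∨ t ≤ s := by
  rcases hs with ⟨qs, xs, hqs, hds, rfl⟩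
  rcases ht with ⟨qt, ys, hqt, hdt, rfl⟩
  have hqsP : qs ≤ P := (le_extL qs xs).trans hsP
  have hqtP : qt ≤ P := (le_extL qt ys).trans htP
  rcases T0_comparable hqs hqt hqsP hqtP with hc | hc
  · rcases List.eq_nil_or_concat xs with rfl | ⟨_, _, hne⟩
    · exact Or.inl (hc.trans (le_extL qt ys))
    · have hxs : xs ≠ [] := by rw [hne]; simp
      have : qt = qs := dead_max (hds hxs) hc hqt
      subst this
      exact extL_comparable hsP htP
  · rcases List.eq_nil_or_concat ys with rfl | ⟨_, _, hne⟩
    · exact Or.inr (hc.trans (le_extL qs xs))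
    · have hys : ys ≠ [] := by rw [hne]; simp
      have : qs = qt := dead_max (hdt hys) hc hqs
      subst this
      exact extL_comparable hsP htP

lemma TT_isTreeOn : IsTreeOn (FPF.empty A) (TT code q r α) := by
  refine ⟨empty_mem_TT, fun p _ => empty_le p, fun p hp s hs t ht _ => ?_⟩
  exact TT_comparable hs.1 ht.1 hs.2 ht.2

/-- Classification: a tree node with a result is a core. -/
lemma TT_result_core {p : FPF A} (hp : p ∈ TT code q r α) {c : A}
    (h : ResultM code q r α p c) : T0 code q r α p := by
  rcases hp with ⟨q0, xs, hq0, hd, rfl⟩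
  rcases List.eq_nil_or_concat xs with rfl | ⟨_, _, hne⟩
  · exact hq0
  · exfalso
    have hxs : xs ≠ [] := by rw [hne]; simp
    exact (dead_mono (hd hxs) (le_extL q0 xs)).2 ⟨c, h⟩

lemma TT_asks_core {p : FPF A} (hp : p ∈ TT code q r α) {b : A}
    (h : AsksM code q r α p b) : T0 code q r α p := by
  rcases hp with ⟨q0, xs, hq0, hd, rfl⟩
  rcases List.eq_nil_or_concat xs with rfl | ⟨_, _, hne⟩
  · exact hq0
  · exfalso
    have hxs : xs ≠ [] := by rw [hne]; simp
    exact (dead_mono (hd hxs) (le_extL q0 xs)).1 ⟨b, h⟩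

lemma TT_dead_decomp {p : FPF A} (hp : p ∈ TT code q r α) (h : DeadM code q r α p) :
    ∃ q0 xs, T0 code q r α q0 ∧ DeadM code q r α q0 ∧ extL q0 xs = p := by
  rcases hp with ⟨q0, xs, hq0, hd, rfl⟩
  rcases List.eq_nil_or_concat xs with rfl | ⟨_, _, hne⟩
  · exact ⟨q0, [], hq0, h, rfl⟩
  · have hxs : xs ≠ [] := by rw [hne]; simp
    exact ⟨q0, xs, hq0, hd hxs, rfl⟩

end TreeBasics

end St3
namespace St3

set_option linter.unusedSectionVars false

variable {A : Type u}

section TreeStruct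

variable [Infinite A] {code : List A → A} {q r : A} {α : A → A}

lemma TT_result_leaf {p : FPF A} (hp : p ∈ TT code q r α) {c : A}
    (h : ResultM code q r α p c) : IsLeaf (TT code q r α) p := by
  refine ⟨hp, ?_⟩
  rintro ⟨t, ht, hlt⟩
  rcases ht with ⟨qt, ys, hqt, hdt, rfl⟩
  have hp0 : T0 code q r α p := TT_result_core hp h
  have hqtle : qt ≤ extL qt ys := le_extL qt ys
  rcases T0_comparable hp0 hqt hlt.le hqtle with hc | hc
  · have : qt = p := result_max h hc hqt
    subst this
    rcases List.eq_nil_or_concat ys with rfl | ⟨ys', z, rfl⟩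
    · exact absurd rfl hlt.ne
    · exact (hdt (by simp)).2 ⟨c, h⟩
  · rcases List.eq_nil_or_concat ys with rfl | ⟨ys', z, rfl⟩
    · exact absurd (lt_of_lt_of_le hlt hc) (lt_irrefl p)
    · exact (dead_mono (hdt (by simp)) hc).2 ⟨c, h⟩

lemma asks_child_T0 {p q' : FPF A} {b : A} (hp0 : T0 code q r α p)
    (h : AsksM code q r α p b) (hle : p ≤ q')
    (hd : FPF.dom q' = insert b (FPF.dom p)) : T0 code q r α q' := by
  intro b' hb'
  rw [hd] at hb'
  rcases hb' with rfl | hb'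
  · rcases h with ⟨n, L, hr, hm⟩
    exact ⟨n, L, runM_mono hle hr, (mstep_ask_inv hm).1⟩
  · rcases hp0 b' hb' with ⟨m, M, hrm, hqm⟩
    exact ⟨m, M, runM_mono hle hrm, hqm⟩

lemma between_eq {p t q' : FPF A} {b : A} (hpt : p ≤ t) (htq : t ≤ q')
    (hpq : p ≤ q') (hb : b ∉ FPF.dom p)
    (hd : FPF.dom q' = insert b (FPF.dom p)) : t = p ∨ t = q' := by
  by_cases hbt : b ∈ FPF.dom t
  · refine Or.inr (le_antisymm htq (fpf_le_of_dom_subset le_rfl htq ?_))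
    rw [hd]
    intro y hy
    rcases hy with rfl | hy
    · exact hbt
    · exact dom_mono hpt hy
  · refine Or.inl (le_antisymm (fpf_le_of_dom_subset htq hpq ?_) hpt)
    intro y hy
    have := dom_mono htq hy
    rw [hd] at this
    rcases this with rfl | h2
    · exact absurd hy hbt
    · exact h2

lemma TT_asks_succ {p : FPF A} (hp : p ∈ TT code q r α) {b : A}
    (h : AsksM code q r α p b) :
    b ∉ FPF.dom p ∧ ∀ q', ImmSucc (TT code q r α) p q' ↔
      (p < q' ∧ FPF.dom q' = insert b (FPF.dom p)) := by
  have hp0 : T0 code q r α p := TT_asks_core hp h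
  have hbp : b ∉ FPF.dom p := by
    rcases h with ⟨n, L, hr, hm⟩
    exact pval_eq_none_iff.1 (mstep_ask_inv hm).2
  refine ⟨hbp, fun q' => ⟨?_, ?_⟩⟩
  · rintro ⟨hq'T, hlt, hnb⟩
    refine ⟨hlt, ?_⟩
    rcases hq'T with ⟨qt, ys, hqt, hdt, rfl⟩
    have hqtle : qt ≤ extL qt ys := le_extL qt ys
    rcases T0_comparable hp0 hqt hlt.le hqtle with hc | hc
    · by_cases hbqt : b ∈ FPF.dom qt
      · rcases mem_dom_iff.1 hbqt with ⟨x, hx⟩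
        set t := extF p b x with htdef
        have hplt : p < t := lt_extF hbp x
        have htqt : t ≤ qt := by
          rw [fpf_le_iff, extF_val hbp]
          intro z hz
          rcases hz with hz | hz
          · cases hz; exact hx
          · exact hc hz
        have htq' : t ≤ extL qt ys := htqt.trans hqtle
        have htT : t ∈ TT code q r α :=
          T0_mem_TT (asks_child_T0 hp0 h (le_extF hbp x) (dom_extF hbp x))
        have : t = extL qt ys := by
          by_contra hne
          exact hnb ⟨t, htT, hplt, lt_of_le_of_ne htq' hne⟩
        rw [← this, htdef, dom_extF hbp x]
      · have : qt = p := asks_max h hc hqt hbqt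
        subst this
        rcases List.eq_nil_or_concat ys with rfl | ⟨ys', z, rfl⟩
        · exact absurd rfl hlt.ne
        · exact absurd ⟨b, h⟩ (hdt (by simp)).1
    · exfalso
      rcases List.eq_nil_or_concat ys with rfl | ⟨ys', z, rfl⟩
      · exact absurd (lt_of_lt_of_le hlt hc) (lt_irrefl p)
      · exact (dead_mono (hdt (by simp)) hc).1 ⟨b, h⟩
  · rintro ⟨hlt, hd⟩
    refine ⟨T0_mem_TT (asks_child_T0 hp0 h hlt.le hd), hlt, ?_⟩
    rintro ⟨t, htT, hpt, htq⟩
    rcases between_eq hpt.le htq.le hlt.le hbp hd with rfl | rfl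
    · exact absurd rfl hpt.ne
    · exact absurd rfl htq.ne

lemma extL_snoc (q0 : FPF A) (xs : List A) (x : A) :
    extL q0 (xs ++ [x]) = pushF (extL q0 xs) x := by
  rw [extL_append]; rfl

lemma TT_dead_succ {p : FPF A} (hp : p ∈ TT code q r α) (h : DeadM code q r α p) :
    ∀ q', ImmSucc (TT code q r α) p q' ↔
      (p < q' ∧ FPF.dom q' = insert (freshA p) (FPF.dom p)) := by
  rcases TT_dead_decomp hp h with ⟨q0, xs, hq0, hd0, rfl⟩
  set p := extL q0 xs with hpdef
  intro q'
  constructor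
  · rintro ⟨hq'T, hlt, hnb⟩
    refine ⟨hlt, ?_⟩
    rcases hq'T with ⟨qt, ys, hqt, hdt, rfl⟩
    have hqtle : qt ≤ extL qt ys := le_extL qt ys
    have hq0p : q0 ≤ p := le_extL q0 xs
    have hq0q' : q0 ≤ extL qt ys := hq0p.trans hlt.le
    have hqteq : qt = q0 := by
      rcases T0_comparable hq0 hqt hq0q' hqtle with hc | hc
      · exact dead_max hd0 hc hqt
      · rcases List.eq_nil_or_concat ys with rfl | ⟨ys', z, rfl⟩
        · exact absurd (lt_of_lt_of_le hlt (hc.trans hq0p)) (lt_irrefl p)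
        · exact (dead_max (hdt (by simp)) hc hq0).symm
    subst hqteq
    rcases extL_prefix (Q := qt) (hlt.le : extL qt xs ≤ extL qt ys) with ⟨zs, rfl⟩
    rcases zs with _ | ⟨z, zs'⟩
    · exfalso; rw [List.append_nil] at hlt; exact absurd rfl hlt.ne
    · have hteq : extL qt (xs ++ [z]) = pushF p z := extL_snoc qt xs z
      have htT : extL qt (xs ++ [z]) ∈ TT code q r α :=
        ⟨qt, xs ++ [z], hq0, fun _ => hd0, rfl⟩
      have htle : extL qt (xs ++ [z]) ≤ extL qt (xs ++ z :: zs') := by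
        have h1 : xs ++ z :: zs' = (xs ++ [z]) ++ zs' := by simp
        rw [h1, extL_append qt (xs ++ [z]) zs']
        exact le_extL _ zs'
      have : extL qt (xs ++ [z]) = extL qt (xs ++ z :: zs') := by
        by_contra hne
        exact hnb ⟨extL qt (xs ++ [z]), htT,
          hteq ▸ lt_pushF p z, lt_of_le_of_ne htle hne⟩
      rw [← this, hteq, dom_pushF]
  · rintro ⟨hlt, hd⟩
    have hfr : freshA p ∈ FPF.dom q' := by rw [hd]; exact Set.mem_insert _ _
    rcases mem_dom_iff.1 hfr with ⟨x, hx⟩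
    have hq'eq : q' = pushF p x :=
      eq_extF_of_dom (freshA_not_mem p) hlt.le hd hx
    have hq'T : q' ∈ TT code q r α := by
      rw [hq'eq, ← extL_snoc q0 xs x]
      exact ⟨q0, xs ++ [x], hq0, fun _ => hd0, rfl⟩
    refine ⟨hq'T, hlt, ?_⟩
    rintro ⟨t, htT, hpt, htq⟩
    rcases between_eq hpt.le htq.le hlt.le (freshA_not_mem p) hd with rfl | rfl
    · exact absurd rfl hpt.ne
    · exact absurd rfl htq.ne

/-- The tree of `α` is a total sequential tree. -/
lemma TT_totalSeqTree : IsTotalSeqTree (TT code q r α) := by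
  refine ⟨TT_isTreeOn, fun p hp hnl => ?_⟩
  by_cases hres : ∃ c, ResultM code q r α p c
  · exact absurd (TT_result_leaf hp hres.choose_spec) hnl
  by_cases hask : ∃ b, AsksM code q r α p b
  · rcases hask with ⟨b, hb⟩
    rcases TT_asks_succ hp hb with ⟨hbp, hiff⟩
    exact ⟨b, hbp, hiff⟩
  · exact ⟨freshA p, freshA_not_mem p, TT_dead_succ hp ⟨hask, hres⟩⟩

/-- Leaves of the tree carry results. -/
lemma TT_leaf_result {p : FPF A} (h : IsLeaf (TT code q r α) p) :
    ∃ c, ResultM code q r α p c := by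
  by_contra hres
  by_cases hask : ∃ b, AsksM code q r α p b
  · rcases hask with ⟨b, hb⟩
    rcases TT_asks_succ h.1 hb with ⟨hbp, _⟩
    refine h.2 ⟨extF p b b, ?_, lt_extF hbp b⟩
    exact T0_mem_TT (asks_child_T0 (TT_asks_core h.1 hb) hb (le_extF hbp b) (dom_extF hbp b))
  · have hdead : DeadM code q r α p := ⟨hask, hres⟩
    rcases TT_dead_decomp h.1 hdead with ⟨q0, xs, hq0, hd0, rfl⟩
    refine h.2 ⟨pushF (extL q0 xs) q, ?_, lt_pushF _ q⟩
    rw [← extL_snoc q0 xs q]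
    exact ⟨q0, xs ++ [q], hq0, fun _ => hd0, rfl⟩

end TreeStruct

end St3
namespace St3

set_option linter.unusedSectionVars false

variable {A : Type u}

section Link

variable [Infinite A] {code : List A → A} {q r : A} {α : A → A}

/-- The leaf-labelling of the tree of `α`. -/
def FofTT (code : List A → A) (q r : A) (α : A → A) (p : FPF A) : A :=
  if h : ∃ c, ResultM code q r α p c then h.choose else q

lemma result_unique {p : FPF A} {c c' : A} (h : ResultM code q r α p c)
    (h' : ResultM code q r α p c') : c = c' := by
  rcases h with ⟨n, L, hr, hm⟩
  rcases h' with ⟨n', L', hr', hm'⟩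
  rcases death_unique hr hr' (mstep_res_not_cont hm) (mstep_res_not_cont hm') with ⟨_, rfl⟩
  rw [hm] at hm'; cases hm'; rfl

lemma FofTT_eq {p : FPF A} {c : A} (h : ResultM code q r α p c) :
    FofTT code q r α p = c := by
  unfold FofTT
  rw [dif_pos ⟨c, h⟩]
  exact result_unique (Exists.choose_spec ⟨c, h⟩) h

lemma code_pair_inj (hcode : Function.Injective code) {s : A} {x y : A}
    (h : code [s, x] = code [s, y]) : x = y := by
  have := hcode h
  simpa using this

lemma qnext_eq_inl' (hcode : Function.Injective code) {L : List A} {b : A}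
    (h : α (code L) = code [q, b]) :
    qnext code q r α L = some (Sum.inl b) := by
  unfold qnext
  rw [dif_pos ⟨b, h⟩]
  have hc := Exists.choose_spec (⟨b, h⟩ : ∃ b, α (code L) = code [q, b])
  exact congrArg (fun z => some (Sum.inl z)) (code_pair_inj hcode (h.symm.trans hc)).symm

lemma qnext_eq_inr' (hcode : Function.Injective code) (hqr : q ≠ r) {L : List A} {c : A}
    (h : α (code L) = code [r, c]) :
    qnext code q r α L = some (Sum.inr c) := by
  unfold qnext
  have hneg : ¬∃ b, α (code L) = code [q, b] := by
    rintro ⟨b, hb⟩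
    rw [h] at hb
    have := hcode hb
    simp only [List.cons.injEq] at this
    exact hqr this.1.symm
  rw [dif_neg hneg, dif_pos ⟨c, h⟩]
  have hc := Exists.choose_spec (⟨c, h⟩ : ∃ c, α (code L) = code [r, c])
  exact congrArg (fun z => some (Sum.inr z)) (code_pair_inj hcode (h.symm.trans hc)).symm

lemma qnext_inl_inv {L : List A} {b : A} (h : qnext code q r α L = some (Sum.inl b)) :
    α (code L) = code [q, b] := by
  unfold qnext at h
  split at h
  · rename_i hex
    cases h
    exact hex.choose_spec
  · split at h
    · cases h
    · cases h

lemma qnext_inr_inv {L : List A} {c : A} (h : qnext code q r α L = some (Sum.inr c)) :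
    α (code L) = code [r, c] := by
  unfold qnext at h
  split at h
  · cases h
  · split at h
    · rename_i hex
      cases h
      exact hex.choose_spec
    · cases h

lemma runM_take {p : FPF A} {n : ℕ} {L : List A} (h : runM code q r α p n = some L) :
    ∀ m ≤ n, runM code q r α p m = some (L.take m) := by
  induction n generalizing L with
  | zero =>
    intro m hm
    cases Nat.le_zero.1 hm
    cases h; rfl
  | succ k ih =>
    intro m hm
    rcases runM_succ_some h with ⟨L', hL', hms⟩
    rcases mstep_cont_inv hms with ⟨b, x, hq, hp, rfl⟩
    have hlen : L'.length = k := runM_length hL'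
    rcases Nat.lt_or_ge m (k + 1) with hlt | hge
    · have hmk : m ≤ k := Nat.lt_succ_iff.1 hlt
      rw [List.take_append_of_le_length (by omega)]
      exact ih hL' m hmk
    · have : m = k + 1 := le_antisymm hm hge
      subst this
      rw [List.take_of_length_le (by simp [hlen])]
      exact h

/-- From an interrogation of `β`, the leaf it determines. -/
lemma phiRel_to_leaf (hcode : Function.Injective code) (hqr : q ≠ r) {β : A → A} {b : A}
    (h : phiRel code (fun x => code [q, x]) (fun x => code [r, x]) α β b) :
    ∃ v, IsLeaf (TT code q r α) v ∧ agrees β v ∧ FofTT code q r α v = b := by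
  rcases h with ⟨L, hInt, hres⟩
  classical
  set Qs : Set A := {x | ∃ j, ∃ _ : j < L.length, α (code (L.take j)) = code [q, x]}
    with hQs
  have hQfin : Qs.Finite := by
    have : Qs ⊆ (fun j : ℕ => if hj : j < L.length then (hInt j hj).choose else q) ''
        (Set.Iio L.length) := by
      rintro x ⟨j, hj, hx⟩
      refine ⟨j, hj, ?_⟩
      show (if hj : j < L.length then (hInt j hj).choose else q) = x
      rw [dif_pos hj]
      have hc := (hInt j hj).choose_spec.1
      exact (code_pair_inj hcode (hx.symm.trans hc)).symm
    exact Set.Finite.subset ((Set.finite_Iio _).image _) this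
  set v : FPF A := ⟨(fun x => (x, β x)) '' Qs, by
    rintro a y y' hy hy'
    rcases hy with ⟨x, _, hx⟩
    rcases hy' with ⟨x', _, hx'⟩
    rw [Prod.mk.injEq] at hx hx'
    rw [← hx.2, ← hx'.2, hx.1, hx'.1], hQfin.image _⟩ with hv
  have hdomv : FPF.dom v = Qs := by
    ext x
    rw [mem_dom_iff]
    constructor
    · rintro ⟨y, ⟨x', hx', hxy⟩⟩
      rw [Prod.mk.injEq] at hxy
      rw [← hxy.1]; exact hx'
    · intro hx
      exact ⟨β x, ⟨x, hx, rfl⟩⟩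
  have hpv : ∀ x ∈ Qs, pval v x = some (β x) := fun x hx =>
    pval_eq_some_iff.2 ⟨x, hx, rfl⟩
  have hrun : ∀ n ≤ L.length, runM code q r α v n = some (L.take n) := by
    intro n hn
    induction n with
    | zero => rfl
    | succ k ih =>
      have hk : k < L.length := hn
      rcases hInt k hk with ⟨bk, hab, hbb⟩
      have hq : qnext code q r α (L.take k) = some (Sum.inl bk) :=
        qnext_eq_inl' hcode hab
      have hbkQ : bk ∈ Qs := ⟨k, hk, hab⟩
      have hms : mstep code q r α v (L.take k) = .cont (L.take k ++ [bk].map β) := by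
        simpa using mstep_eq_cont hq (hpv bk hbkQ)
      have : L.take k ++ [β bk] = L.take (k + 1) := by
        rw [hbb, List.take_succ, List.getElem?_eq_getElem hk]
        rfl
      rw [← this]
      exact runM_succ_of (ih (le_of_lt hk)) (by simpa using hms)
  have hrunL : runM code q r α v L.length = some L := by
    have := hrun L.length le_rfl
    rwa [List.take_length] at this
  have hresM : ResultM code q r α v b :=
    ⟨L.length, L, hrunL, mstep_eq_res (qnext_eq_inr' hcode hqr hres)⟩
  have hT0 : T0 code q r α v := by
    intro x hx
    rw [hdomv] at hx
    rcases hx with ⟨j, hj, hxj⟩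
    exact ⟨j, L.take j, hrun j (le_of_lt hj), qnext_eq_inl' hcode hxj⟩
  refine ⟨v, TT_result_leaf (T0_mem_TT hT0) hresM, ?_, FofTT_eq hresM⟩
  rintro a y ⟨x, _, hxy⟩
  rw [Prod.mk.injEq] at hxy
  rw [← hxy.1, ← hxy.2]

/-- From a leaf agreeing with `β`, the interrogation. -/
lemma leaf_to_phiRel {β : A → A} {b : A} {v : FPF A}
    (hleaf : IsLeaf (TT code q r α) v) (hag : agrees β v)
    (hF : FofTT code q r α v = b) :
    phiRel code (fun x => code [q, x]) (fun x => code [r, x]) α β b := by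
  rcases TT_leaf_result hleaf with ⟨c, hres⟩
  have hcb : c = b := by rw [← hF, FofTT_eq hres]
  subst hcb
  rcases hres with ⟨n, L, hr, hm⟩
  have hlen : L.length = n := runM_length hr
  refine ⟨L, ?_, qnext_inr_inv (mstep_res_inv hm)⟩
  intro j hj
  have hjn : j < n := by omega
  have hrj1 : runM code q r α v (j + 1) = some (L.take (j + 1)) :=
    runM_take hr (j + 1) hjn
  rcases runM_succ_some hrj1 with ⟨L0, hL0, hms⟩
  have hL0eq : L0 = L.take j := by
    have := runM_take hr j (le_of_lt hjn)
    rw [hL0] at this; cases this; rfl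
  subst hL0eq
  rcases mstep_cont_inv hms with ⟨bj, x, hqn, hpv, hx⟩
  have hxLj : x = L[j] := by
    rw [List.take_succ, List.getElem?_eq_getElem hj] at hx
    have := List.append_inj_right hx (by simp)
    simp only [Option.toList_some] at this
    exact (List.cons.injEq .. ▸ this : _ ∧ _).1.symm
  refine ⟨bj, qnext_inl_inv hqn, ?_⟩
  rw [← hxLj]
  exact hag (pval_eq_some_iff.1 hpv)

end Link

end St3
namespace St3

set_option linter.unusedSectionVars false

variable {A : Type u}

section Converse

variable {code : List A → A} {q r : A}

/-- The chosen interrogation point of a node of `T`. -/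
def selT (T : Set (FPF A)) (p : FPF A) : Option A :=
  if h : ∃ a ∉ FPF.dom p, ∀ q', ImmSucc T p q' ↔
      p < q' ∧ FPF.dom q' = insert a (FPF.dom p) then some h.choose else none

/-- One step along the tree, consuming one oracle answer. -/
def stepT (T : Set (FPF A)) (op : Option (FPF A)) (x : A) : Option (FPF A) :=
  op.bind fun p => (selT T p).map fun a => extF p a x

/-- The node of `T` reached by following the answer list `L`. -/
def nodeT (T : Set (FPF A)) (L : List A) : Option (FPF A) :=
  L.foldl (stepT T) (some (FPF.empty A))

/-- The value of the constructed `α` on (the code of) `L`. -/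
def outT (code : List A → A) (q r : A) (T : Set (FPF A)) (F : FPF A → A)
    (L : List A) : A :=
  match nodeT T L with
  | none => code []
  | some p =>
      if IsLeaf T p then code [r, F p]
      else
        match selT T p with
        | some a => code [q, a]
        | none => code []

/-- The constructed `α` realizing a sequential tree by interrogations. -/
def alphaT (code : List A → A) (q r : A) (T : Set (FPF A)) (F : FPF A → A) : A → A :=
  fun z => if h : ∃ L, code L = z then outT code q r T F h.choose else code []

lemma alphaT_code (hcode : Function.Injective code) (T : Set (FPF A)) (F : FPF A → A)
    (L : List A) : alphaT code q r T F (code L) = outT code q r T F L := by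
  unfold alphaT
  rw [dif_pos ⟨L, rfl⟩]
  rw [hcode (⟨L, rfl⟩ : ∃ L', code L' = code L).choose_spec]

lemma selT_spec {T : Set (FPF A)} {p : FPF A} {a : A} (h : selT T p = some a) :
    a ∉ FPF.dom p ∧ ∀ q', ImmSucc T p q' ↔
      p < q' ∧ FPF.dom q' = insert a (FPF.dom p) := by
  unfold selT at h
  split at h
  · rename_i hex
    cases h
    exact hex.choose_spec
  · cases h

lemma selT_isSome {T : Set (FPF A)} (htree : IsTotalSeqTree T) {p : FPF A}
    (hp : p ∈ T) (hnl : ¬IsLeaf T p) : ∃ a, selT T p = some a := by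
  rcases htree.2 p hp hnl with ⟨a, ha, hiff⟩
  refine ⟨(⟨a, ha, hiff⟩ : ∃ a ∉ FPF.dom p, ∀ q', ImmSucc T p q' ↔
      p < q' ∧ FPF.dom q' = insert a (FPF.dom p)).choose, ?_⟩
  unfold selT
  rw [dif_pos ⟨a, ha, hiff⟩]

lemma selT_leaf {T : Set (FPF A)} {p : FPF A} (h : IsLeaf T p) : selT T p = none := by
  unfold selT
  rw [dif_neg]
  rintro ⟨a, ha, hiff⟩
  have himm : ImmSucc T p (extF p a a) :=
    (hiff (extF p a a)).2 ⟨lt_extF ha a, dom_extF ha a⟩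
  exact h.2 ⟨extF p a a, himm.1, himm.2.1⟩

lemma nodeT_append (T : Set (FPF A)) (L : List A) (x : A) :
    nodeT T (L ++ [x]) = stepT T (nodeT T L) x := by
  unfold nodeT
  simp

lemma nodeT_mem {T : Set (FPF A)} {L : List A} {p : FPF A} (hroot : FPF.empty A ∈ T)
    (h : nodeT T L = some p) : p ∈ T := by
  suffices H : ∀ (L : List A) (op : Option (FPF A)),
      (∀ p', op = some p' → p' ∈ T) → ∀ p', L.foldl (stepT T) op = some p' → p' ∈ T by
    exact H L (some (FPF.empty A)) (fun p' hp' => by cases hp'; exact hroot) p h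
  intro L
  induction L with
  | nil => intro op hop p' h'; exact hop p' h'
  | cons x L ih =>
    intro op hop p' h'
    refine ih (stepT T op x) ?_ p' h'
    intro p'' hp''
    unfold stepT at hp''
    rcases op with _ | p0
    · cases hp''
    · simp only [Option.bind_some] at hp''
      rcases hsel : selT T p0 with _ | a
      · rw [hsel] at hp''; cases hp''
      · rw [hsel] at hp''
        simp only [Option.map_some] at hp''
        cases hp''
        rcases selT_spec hsel with ⟨ha, hiff⟩
        exact ((hiff _).2 ⟨lt_extF ha x, dom_extF ha x⟩).1

lemma stepT_some {T : Set (FPF A)} {p : FPF A} {a : A} (h : selT T p = some a) (x : A) :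
    stepT T (some p) x = some (extF p a x) := by
  unfold stepT
  rw [Option.bind_some, h, Option.map_some]

lemma outT_eq {T : Set (FPF A)} {F : FPF A → A} {L : List A} {p : FPF A}
    (hp : nodeT T L = some p) :
    outT code q r T F L = if IsLeaf T p then code [r, F p]
      else
        match selT T p with
        | some a => code [q, a]
        | none => code [] := by
  unfold outT
  rw [hp]

/-- Any value of `φ_{alphaT}` is the label of a leaf met by `β`. -/
lemma phiRel_to_leaf_T (hcode : Function.Injective code) (hqr : q ≠ r)
    {T : Set (FPF A)} {F : FPF A → A} (htree : IsTotalSeqTree T)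
    {β : A → A} {b : A}
    (h : phiRel code (fun x => code [q, x]) (fun x => code [r, x])
      (alphaT code q r T F) β b) :
    ∃ v, IsLeaf T v ∧ agrees β v ∧ F v = b := by
  rcases h with ⟨L, hInt, hres⟩
  have key : ∀ j ≤ L.length, ∃ p, nodeT T (L.take j) = some p ∧ agrees β p := by
    intro j hj
    induction j with
    | zero => exact ⟨FPF.empty A, rfl, fun a b hab => absurd hab (Set.notMem_empty _)⟩
    | succ k ih =>
      rcases ih (le_of_lt hj) with ⟨p, hp, hag⟩
      rcases hInt k hj with ⟨bq, hab, hbq⟩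
      have hpT : p ∈ T := nodeT_mem htree.1.1 hp
      rw [alphaT_code hcode, outT_eq hp] at hab
      by_cases hleaf : IsLeaf T p
      · rw [if_pos hleaf] at hab
        exfalso
        have := hcode hab
        simp only [List.cons.injEq] at this
        exact hqr this.1.symm
      · rw [if_neg hleaf] at hab
        rcases selT_isSome htree hpT hleaf with ⟨a, hsel⟩
        rw [hsel] at hab
        have haeq : a = bq := by
          have := hcode hab
          simp only [List.cons.injEq] at this
          exact this.2.1
        subst haeq
        have htake : L.take (k + 1) = L.take k ++ [L[k]'hj] := by
          rw [List.take_succ, List.getElem?_eq_getElem hj]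
          rfl
        refine ⟨extF p a (L[k]'hj), ?_, ?_⟩
        · rw [htake, nodeT_append, hp, stepT_some hsel]
        · have ha := (selT_spec hsel).1
          rintro a' y hy
          rw [extF_val ha] at hy
          rcases hy with hy | hy
          · rw [Prod.mk.injEq] at hy
            rw [hy.1, hy.2]
            exact hbq
          · exact hag hy
  rcases key L.length le_rfl with ⟨v, hv, hag⟩
  rw [List.take_length] at hv
  rw [alphaT_code hcode, outT_eq hv] at hres
  by_cases hleaf : IsLeaf T v
  · rw [if_pos hleaf] at hres
    have := hcode hres
    simp only [List.cons.injEq] at this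
    exact ⟨v, hleaf, hag, this.2.1⟩
  · exfalso
    rw [if_neg hleaf] at hres
    rcases selT_isSome htree (nodeT_mem htree.1.1 hv) hleaf with ⟨a, hsel⟩
    rw [hsel] at hres
    have := hcode hres
    simp only [List.cons.injEq] at this
    exact hqr this.1

/-- Conversely, every leaf met by `β` is reached by an interrogation. -/
lemma leaf_to_phiRel_T (hcode : Function.Injective code) (hqr : q ≠ r)
    {T : Set (FPF A)} {F : FPF A → A} (htree : IsTotalSeqTree T)
    {β : A → A} {b : A} {v : FPF A} (hleaf : IsLeaf T v) (hag : agrees β v)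
    (hF : F v = b) :
    phiRel code (fun x => code [q, x]) (fun x => code [r, x])
      (alphaT code q r T F) β b := by
  set α := alphaT code q r T F with hα
  have hvT : v ∈ T := hleaf.1
  have key : ∀ n (u : FPF A), u ∈ T → u ≤ v → (FPF.dom v \ FPF.dom u).ncard ≤ n →
      ∀ L, nodeT T L = some u →
        Interrog code (fun x => code [q, x]) α β L →
        ∃ L', nodeT T L' = some v ∧ Interrog code (fun x => code [q, x]) α β L' := by
    intro n
    induction n with
    | zero =>
      intro u huT huv hcard L hL hInt
      have hdom : FPF.dom v ⊆ FPF.dom u := by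
        have : (FPF.dom v \ FPF.dom u) = ∅ :=
          (Set.ncard_eq_zero (dom_finite v).diff).1 (Nat.le_zero.1 hcard)
        intro x hx
        by_contra hxu
        exact absurd (Set.mem_diff_of_mem hx hxu) (this ▸ Set.notMem_empty x)
      have : u = v := le_antisymm huv (fpf_le_of_dom_subset le_rfl huv hdom)
      subst this
      exact ⟨L, hL, hInt⟩
    | succ n ih =>
      intro u huT huv hcard L hL hInt
      by_cases huveq : u = v
      · subst huveq; exact ⟨L, hL, hInt⟩
      have hult : u < v := lt_of_le_of_ne huv huveq
      have hnl : ¬IsLeaf T u := fun hl => hl.2 ⟨v, hvT, hult⟩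
      rcases selT_isSome htree huT hnl with ⟨a, hsel⟩
      rcases selT_spec hsel with ⟨hadom, hiff⟩
      -- find the minimal strict extension of u below v
      set C : Set (FPF A) := {t | t ∈ T ∧ u < t ∧ t ≤ v} with hC
      have hCfin : C.Finite := by
        have h1 : {s : Set (A × A) | s ⊆ v.val}.Finite :=
          Set.Finite.finite_subsets v.prop.2
        have h2 : (Subtype.val ⁻¹' {s : Set (A × A) | s ⊆ v.val} :
            Set (FPF A)).Finite :=
          Set.Finite.preimage (Set.injOn_of_injective Subtype.val_injective)  h1
        exact h2.subset (fun t ht => ht.2.2)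
      have hCne : C.Nonempty := ⟨v, hvT, hult, le_rfl⟩
      rcases hCfin.exists_minimal hCne with ⟨w, hwC, hwmin'⟩
      have hwmin : ∀ t ∈ C, id t ≤ id w → id w = id t :=
        fun t ht h => le_antisymm (hwmin' ht h) h
      have himm : ImmSucc T u w := by
        refine ⟨hwC.1, hwC.2.1, ?_⟩
        rintro ⟨t, htT, hut, htw⟩
        have htC : t ∈ C := ⟨htT, hut, htw.le.trans hwC.2.2⟩
        exact absurd ((hwmin t htC htw.le).symm : t = w) htw.ne
      rcases (hiff w).1 himm with ⟨hulw, hdomw⟩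
      have hav : a ∈ FPF.dom v := dom_mono hwC.2.2 (hdomw ▸ Set.mem_insert _ _)
      rcases mem_dom_iff.1 hav with ⟨x, hax⟩
      have haw : (a, x) ∈ w.val := by
        have : a ∈ FPF.dom w := hdomw ▸ Set.mem_insert _ _
        rcases mem_dom_iff.1 this with ⟨x', hx'⟩
        have : x' = x := fpf_fn v (hwC.2.2 hx') hax
        rwa [this] at hx'
      have hweq : w = extF u a x := eq_extF_of_dom hadom hulw.le hdomw haw
      have hnode' : nodeT T (L ++ [x]) = some w := by
        rw [nodeT_append, hL, stepT_some hsel, hweq]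
      have hlen : (L ++ [x]).length = L.length + 1 := by simp
      have hInt' : Interrog code (fun x => code [q, x]) α β (L ++ [x]) := by
        intro j hj
        rw [hlen] at hj
        rcases Nat.lt_or_ge j L.length with hjL | hjL
        · rcases hInt j hjL with ⟨bq, h1, h2⟩
          refine ⟨bq, ?_, ?_⟩
          · rwa [List.take_append_of_le_length (le_of_lt hjL)]
          · rwa [List.getElem_append_left hjL]
        · have hj' : j = L.length := by omega
          subst hj'
          refine ⟨a, ?_, ?_⟩
          · rw [List.take_left, hα, alphaT_code hcode, outT_eq hL, if_neg hnl, hsel]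
          · rw [List.getElem_concat_length (l := L) (a := x) rfl]
            exact hag hax
      have hcard' : (FPF.dom v \ FPF.dom w).ncard ≤ n := by
        have hss : FPF.dom v \ FPF.dom w ⊂ FPF.dom v \ FPF.dom u := by
          constructor
          · intro z hz
            refine ⟨hz.1, fun hzu => hz.2 ?_⟩
            rw [hdomw]
            exact Set.mem_insert_of_mem _ hzu
          · intro hsub
            have hau : a ∈ FPF.dom v \ FPF.dom u := ⟨hav, hadom⟩
            have := hsub hau
            exact this.2 (hdomw ▸ Set.mem_insert _ _)
        have := Set.ncard_lt_ncard hss (dom_finite v).diff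
        omega
      exact ih w hwC.1 hwC.2.2 hcard' (L ++ [x]) hnode' hInt'
  have hroot_le : FPF.empty A ≤ v := empty_le v
  have hroot_node : nodeT T [] = some (FPF.empty A) := rfl
  have hroot_int : Interrog code (fun x => code [q, x]) α β [] := by
    intro j hj; cases hj
  rcases key (FPF.dom v \ FPF.dom (FPF.empty A)).ncard (FPF.empty A) htree.1.1
      hroot_le le_rfl [] hroot_node hroot_int with ⟨L', hL', hInt'⟩
  refine ⟨L', hInt', ?_⟩
  rw [hα, alphaT_code hcode, outT_eq hL', if_pos hleaf, hF]

end Converse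

end St3
/-- A partial function `A^A ⇀ A` is of the form `φ_α` for some
`α ∈ A^A` precisely when it is partial sequential. -/
theorem statement3 {A : Type u} [Infinite A] (code : List A → A)
    (hcode : Function.Injective code) (q r : A) (hqr : q ≠ r)
    (Φ : (A → A) → Option A) :
    (∃ α : A → A, ∀ (β : A → A) (b : A),
        Φ β = some b ↔ phiRel code (fun x => code [q, x]) (fun x => code [r, x]) α β b)
    ↔ SeqRel (fun β b => Φ β = some b) := by
  constructor
  · rintro ⟨α, hα⟩
    refine ⟨St3.TT code q r α, St3.FofTT code q r α, St3.TT_totalSeqTree, fun β b => ?_⟩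
    show Φ β = some b ↔ _
    rw [hα β b]
    exact ⟨St3.phiRel_to_leaf hcode hqr,
      fun ⟨v, h1, h2, h3⟩ => St3.leaf_to_phiRel h1 h2 h3⟩
  · rintro ⟨T, F, htree, hiff⟩
    refine ⟨St3.alphaT code q r T F, fun β b => ?_⟩
    rw [show Φ β = some b ↔ _ from hiff β b]
    exact ⟨fun ⟨v, h1, h2, h3⟩ => St3.leaf_to_phiRel_T hcode hqr htree h1 h2 h3,
      St3.phiRel_to_leaf_T hcode hqr htree⟩

end OostenK2
end
end
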